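/- arXiv:1610.01051 — 5 statements merged into one kernel-verified Lean document; each statement's English description precedes it below -/
import Mathlib

section
/- Let A₁ = U₁ - V and A₂ = U₂ - V be proper weak regular splittings where A₁ = U₁ - V is of type I and A₂ = U₂ - V is of type II (or vice versa), with ρ(U₁†V) > 0, ρ(U₂†V) > 0, V ≠ 0, and A₂† > A₁† ≥ 0 entrywise. Then ρ(U₁†V) < ρ(U₂†V) < 1. -/
open Matrix Polynomial

/-- `X` is the Moore-Penrose inverse of `A`. -/
def IsMP {m n : ℕ} (A : Matrix (Fin m) (Fin n) ℝ) (X : Matrix (Fin n) (Fin m) ℝ) : Prop :=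
  A * X * A = A ∧ X * A * X = X ∧ (A * X)ᵀ = A * X ∧ (X * A)ᵀ = X * A

/-- `A = U - V` is a proper splitting: `R(U)=R(A)` and `N(U)=N(A)`. -/
def ProperSplitting {m n : ℕ} (A U V : Matrix (Fin m) (Fin n) ℝ) : Prop :=
  A = U - V ∧ LinearMap.range U.mulVecLin = LinearMap.range A.mulVecLin ∧
    LinearMap.ker U.mulVecLin = LinearMap.ker A.mulVecLin

/-- `μ : ℂ` is an eigenvalue of the real matrix `M`. -/
def IsEigen {n : ℕ} (M : Matrix (Fin n) (Fin n) ℝ) (μ : ℂ) : Prop :=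
  ((M.map (algebraMap ℝ ℂ)).charpoly).IsRoot μ

/-- The spectral radius of a real square matrix. -/
noncomputable def specRad {n : ℕ} (M : Matrix (Fin n) (Fin n) ℝ) : ℝ :=
  sSup {r : ℝ | ∃ μ : ℂ, IsEigen M μ ∧ r = ‖μ‖}

/-- Entrywise nonnegativity. -/
def EntryNonneg {m n : ℕ} (A : Matrix (Fin m) (Fin n) ℝ) : Prop := ∀ i j, 0 ≤ A i j

/-- Entrywise order. -/
def EntryLE {m n : ℕ} (A B : Matrix (Fin m) (Fin n) ℝ) : Prop := ∀ i j, A i j ≤ B i j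

/-- Entrywise strict order. -/
def EntryLT {m n : ℕ} (A B : Matrix (Fin m) (Fin n) ℝ) : Prop := ∀ i j, A i j < B i j

namespace StmtAux

open Filter Topology

/-- complexification -/
noncomputable def cx {a b : ℕ} (M : Matrix (Fin a) (Fin b) ℝ) : Matrix (Fin a) (Fin b) ℂ :=
  M.map (algebraMap ℝ ℂ)

lemma cx_mul {a b c : ℕ} (A : Matrix (Fin a) (Fin b) ℝ) (B : Matrix (Fin b) (Fin c) ℝ) :
    cx (A * B) = cx A * cx B := by
  ext i j
  simp [cx, Matrix.mul_apply, map_sum]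

lemma cx_pow {a : ℕ} (M : Matrix (Fin a) (Fin a) ℝ) (N : ℕ) : cx (M ^ N) = cx M ^ N := by
  induction N with
  | zero => ext i j; by_cases h : i = j <;> simp [cx, pow_zero, Matrix.one_apply, h]
  | succ k ih => rw [pow_succ, pow_succ, cx_mul, ih]

lemma scalar_eq_smul_one {k : ℕ} (μ : ℂ) :
    Matrix.scalar (Fin k) μ = μ • (1 : Matrix (Fin k) (Fin k) ℂ) := by
  ext i j
  by_cases h : i = j <;> simp [Matrix.scalar_apply, Matrix.one_apply, h, Matrix.diagonal]

lemma isEigen_iff_det {k : ℕ} {M : Matrix (Fin k) (Fin k) ℝ} {μ : ℂ} :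
    IsEigen M μ ↔ (μ • (1 : Matrix (Fin k) (Fin k) ℂ) - cx M).det = 0 := by
  have h : (M.map (algebraMap ℝ ℂ)).charpoly.eval μ
      = (μ • (1 : Matrix (Fin k) (Fin k) ℂ) - cx M).det := by
    rw [Matrix.charpoly, _root_.eval_det, Matrix.matPolyEquiv_charmatrix]
    rw [Polynomial.eval_sub, Polynomial.eval_X, Polynomial.eval_C, scalar_eq_smul_one]
    rfl
  unfold IsEigen Polynomial.IsRoot
  rw [h]

lemma isEigen_iff_exists_right {k : ℕ} {M : Matrix (Fin k) (Fin k) ℝ} {μ : ℂ} :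
    IsEigen M μ ↔ ∃ z : Fin k → ℂ, z ≠ 0 ∧ (cx M).mulVec z = μ • z := by
  rw [isEigen_iff_det]
  rw [← Matrix.exists_mulVec_eq_zero_iff]
  constructor
  · rintro ⟨v, hv, hveq⟩
    refine ⟨v, hv, ?_⟩
    have := hveq
    rw [Matrix.sub_mulVec, Matrix.smul_mulVec, Matrix.one_mulVec, sub_eq_zero] at this
    exact this.symm
  · rintro ⟨z, hz, hzeq⟩
    refine ⟨z, hz, ?_⟩
    rw [Matrix.sub_mulVec, Matrix.smul_mulVec, Matrix.one_mulVec, sub_eq_zero, hzeq]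

lemma isEigen_iff_exists_left {k : ℕ} {M : Matrix (Fin k) (Fin k) ℝ} {μ : ℂ} :
    IsEigen M μ ↔ ∃ y : Fin k → ℂ, y ≠ 0 ∧ Matrix.vecMul y (cx M) = μ • y := by
  rw [isEigen_iff_det]
  have hdt : (μ • (1 : Matrix (Fin k) (Fin k) ℂ) - cx M).det
      = (μ • (1 : Matrix (Fin k) (Fin k) ℂ) - (cx M)ᵀ).det := by
    rw [← Matrix.det_transpose (μ • 1 - cx M), Matrix.transpose_sub, Matrix.transpose_smul,
      Matrix.transpose_one]
  rw [hdt, ← Matrix.exists_mulVec_eq_zero_iff]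
  constructor
  · rintro ⟨v, hv, hveq⟩
    refine ⟨v, hv, ?_⟩
    rw [Matrix.sub_mulVec, Matrix.smul_mulVec, Matrix.one_mulVec, sub_eq_zero] at hveq
    rw [← Matrix.mulVec_transpose, ← hveq]
  · rintro ⟨y, hy, hyeq⟩
    refine ⟨y, hy, ?_⟩
    rw [Matrix.sub_mulVec, Matrix.smul_mulVec, Matrix.one_mulVec, sub_eq_zero,
      Matrix.mulVec_transpose, hyeq]

lemma eigenSet_finite {k : ℕ} (M : Matrix (Fin k) (Fin k) ℝ) :
    {r : ℝ | ∃ μ : ℂ, IsEigen M μ ∧ r = ‖μ‖}.Finite := by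
  have hne : (M.map (algebraMap ℝ ℂ)).charpoly ≠ 0 := (Matrix.charpoly_monic _).ne_zero
  have hfin : {μ : ℂ | IsEigen M μ}.Finite := by
    apply Set.Finite.subset (M.map (algebraMap ℝ ℂ)).charpoly.roots.toFinset.finite_toSet
    intro μ hμ
    have : μ ∈ (M.map (algebraMap ℝ ℂ)).charpoly.roots.toFinset := by
      rw [Multiset.mem_toFinset, Polynomial.mem_roots hne]
      exact hμ
    exact this
  have : {r : ℝ | ∃ μ : ℂ, IsEigen M μ ∧ r = ‖μ‖}
      = (‖·‖) '' {μ : ℂ | IsEigen M μ} := by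
    ext r
    simp [eq_comm, Set.mem_image]
  rw [this]
  exact hfin.image _

lemma abs_le_specRad {k : ℕ} {M : Matrix (Fin k) (Fin k) ℝ} {μ : ℂ} (h : IsEigen M μ) :
    ‖μ‖ ≤ specRad M :=
  le_csSup (eigenSet_finite M).bddAbove ⟨μ, h, rfl⟩

lemma specRad_nonneg {k : ℕ} (M : Matrix (Fin k) (Fin k) ℝ) : 0 ≤ specRad M := by
  by_cases h : ∃ μ : ℂ, IsEigen M μ
  · obtain ⟨μ, hμ⟩ := h
    exact le_trans (norm_nonneg μ) (abs_le_specRad hμ)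
  · have : {r : ℝ | ∃ μ : ℂ, IsEigen M μ ∧ r = ‖μ‖} = ∅ := by
      ext r; simp only [Set.mem_setOf_eq, Set.mem_empty_iff_false, iff_false]
      rintro ⟨μ, hμ, -⟩; exact h ⟨μ, hμ⟩
    unfold specRad
    rw [this, Real.sSup_empty]

lemma exists_eigen_of_pos {k : ℕ} {M : Matrix (Fin k) (Fin k) ℝ} (h : 0 < k) :
    ∃ μ : ℂ, IsEigen M μ ∧ ‖μ‖ = specRad M := by
  have hdeg : (M.map (algebraMap ℝ ℂ)).charpoly.natDegree = k := by
    rw [Matrix.charpoly_natDegree_eq_dim]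
    simp
  obtain ⟨μ₀, hμ₀⟩ := Complex.exists_root (f := (M.map (algebraMap ℝ ℂ)).charpoly)
    (Polynomial.natDegree_pos_iff_degree_pos.mp (by rw [hdeg]; exact h))
  have hne : {r : ℝ | ∃ μ : ℂ, IsEigen M μ ∧ r = ‖μ‖}.Nonempty :=
    ⟨‖μ₀‖, μ₀, hμ₀, rfl⟩
  obtain ⟨μ, hμ, heq⟩ := hne.csSup_mem (eigenSet_finite M)
  exact ⟨μ, hμ, heq.symm⟩

end StmtAux
namespace StmtAux
open Filter Topology
open scoped NNReal ENNReal

section NormStuff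

attribute [local instance] Matrix.linftyOpNormedAddCommGroup Matrix.linftyOpNormedRing
  Matrix.linftyOpNormedAlgebra

lemma entry_norm_le {a : ℕ} (A : Matrix (Fin a) (Fin a) ℂ) (i j : Fin a) : ‖A i j‖ ≤ ‖A‖ := by
  have h1 : ‖A i j‖₊ ≤ ∑ j' : Fin a, ‖A i j'‖₊ :=
    Finset.single_le_sum (f := fun j' => ‖A i j'‖₊) (fun _ _ => zero_le) (Finset.mem_univ j)
  have h2 : (∑ j' : Fin a, ‖A i j'‖₊) ≤ Finset.univ.sup fun i' => ∑ j' : Fin a, ‖A i' j'‖₊ :=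
    Finset.le_sup (f := fun i' => ∑ j' : Fin a, ‖A i' j'‖₊) (Finset.mem_univ i)
  have := le_trans h1 h2
  rw [← Matrix.linfty_opNNNorm_def] at this
  exact_mod_cast this

lemma mem_spectrum_isEigen {a : ℕ} {M : Matrix (Fin a) (Fin a) ℝ} {k : ℂ}
    (hk : k ∈ spectrum ℂ (cx M)) : IsEigen M k := by
  rw [spectrum.mem_iff] at hk
  rw [isEigen_iff_det]
  by_contra hdet
  apply hk
  rw [Algebra.algebraMap_eq_smul_one]
  rw [Matrix.isUnit_iff_isUnit_det]
  exact isUnit_iff_ne_zero.mpr hdet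

lemma spectralRadius_le_specRad {a : ℕ} (M : Matrix (Fin a) (Fin a) ℝ) :
    spectralRadius ℂ (cx M) ≤ ENNReal.ofReal (specRad M) := by
  apply iSup₂_le
  intro k hk
  have h := abs_le_specRad (mem_spectrum_isEigen hk)
  rw [← ENNReal.ofReal_coe_nnreal, coe_nnnorm]
  exact ENNReal.ofReal_le_ofReal (by simpa using h)

lemma pow_entry_div_tendsto {a : ℕ} {M : Matrix (Fin a) (Fin a) ℝ} {c : ℝ}
    (h : specRad M < c) (i j : Fin a) :
    Tendsto (fun N : ℕ => |(M ^ N) i j| / c ^ N) atTop (𝓝 0) := by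
  have hc : 0 < c := lt_of_le_of_lt (specRad_nonneg M) h
  set s := specRad M with hs
  set c' := (s + c) / 2 with hc'def
  have hs0 : 0 ≤ s := specRad_nonneg M
  have hc'0 : 0 < c' := by rw [hc'def]; linarith
  have hsc' : s < c' := by rw [hc'def]; linarith
  have hc'c : c' < c := by rw [hc'def]; linarith
  have hg := spectrum.pow_nnnorm_pow_one_div_tendsto_nhds_spectralRadius (cx M)
  have hlt : spectralRadius ℂ (cx M) < ENNReal.ofReal c' :=
    lt_of_le_of_lt (spectralRadius_le_specRad M)
      ((ENNReal.ofReal_lt_ofReal_iff hc'0).mpr hsc')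
  have hev : ∀ᶠ (N : ℕ) in atTop, (‖(cx M) ^ N‖₊ : ℝ≥0∞) ^ (1 / (N : ℝ)) < ENNReal.ofReal c' :=
    hg.eventually_lt_const hlt
  have hev2 : ∀ᶠ (N : ℕ) in atTop, |(M ^ N) i j| ≤ c' ^ N := by
    filter_upwards [hev, eventually_ge_atTop 1] with N hN hN1
    have hNne : (N : ℝ) ≠ 0 := by positivity
    have hx : (‖(cx M) ^ N‖₊ : ℝ≥0∞) ≤ (ENNReal.ofReal c') ^ N := by
      have h1 : ((‖(cx M) ^ N‖₊ : ℝ≥0∞) ^ (1 / (N : ℝ))) ^ N ≤ (ENNReal.ofReal c') ^ N :=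
        pow_le_pow_left₀ zero_le hN.le N
      rw [← ENNReal.rpow_natCast ((‖(cx M) ^ N‖₊ : ℝ≥0∞) ^ (1 / (N : ℝ))) N,
        ← ENNReal.rpow_mul, one_div, inv_mul_cancel₀ hNne, ENNReal.rpow_one] at h1
      exact h1
    rw [← ENNReal.ofReal_pow hc'0.le, ← ENNReal.ofReal_coe_nnreal, coe_nnnorm,
      ENNReal.ofReal_le_ofReal_iff (by positivity)] at hx
    have hentry : |(M ^ N) i j| ≤ ‖(cx M) ^ N‖ := by
      have : ((cx M) ^ N) i j = ((M ^ N) i j : ℂ) := by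
        rw [← cx_pow]; simp [cx, Matrix.map_apply]
      calc |(M ^ N) i j| = ‖(((cx M) ^ N) i j)‖ := by rw [this]; simp [Complex.norm_real]
        _ ≤ ‖(cx M) ^ N‖ := entry_norm_le _ i j
    exact le_trans hentry hx
  have hq : Tendsto (fun N : ℕ => (c' / c) ^ N) atTop (𝓝 0) :=
    tendsto_pow_atTop_nhds_zero_of_lt_one (by positivity) (by rw [div_lt_one hc]; exact hc'c)
  apply squeeze_zero' (by filter_upwards with N; positivity) ?_ hq
  filter_upwards [hev2] with N hN
  rw [div_pow]
  gcongr

end NormStuff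
end StmtAux
namespace StmtAux
open Filter Topology

lemma entryNonneg_mul {a b c : ℕ} {A : Matrix (Fin a) (Fin b) ℝ} {B : Matrix (Fin b) (Fin c) ℝ}
    (hA : EntryNonneg A) (hB : EntryNonneg B) : EntryNonneg (A * B) := by
  intro i j
  rw [Matrix.mul_apply]
  exact Finset.sum_nonneg fun l _ => mul_nonneg (hA i l) (hB l j)

lemma entryNonneg_pow {a : ℕ} {M : Matrix (Fin a) (Fin a) ℝ} (hM : EntryNonneg M) (N : ℕ)
    (hN : 1 ≤ N) : EntryNonneg (M ^ N) := by
  induction N with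
  | zero => exact absurd hN (by norm_num)
  | succ k ih =>
    rcases Nat.eq_zero_or_pos k with hk | hk
    · subst hk; simpa [pow_one] using hM
    · rw [pow_succ]; exact entryNonneg_mul (ih hk) hM

lemma mulVec_nonneg {a b : ℕ} {M : Matrix (Fin a) (Fin b) ℝ} (hM : EntryNonneg M)
    {x : Fin b → ℝ} (hx : 0 ≤ x) : 0 ≤ M.mulVec x := by
  intro i
  simp only [Matrix.mulVec, dotProduct, Pi.zero_apply]
  exact Finset.sum_nonneg fun j _ => mul_nonneg (hM i j) (hx j)

lemma mulVec_mono {a b : ℕ} {M : Matrix (Fin a) (Fin b) ℝ} (hM : EntryNonneg M)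
    {x y : Fin b → ℝ} (hxy : x ≤ y) : M.mulVec x ≤ M.mulVec y := by
  intro i
  simp only [Matrix.mulVec, dotProduct]
  exact Finset.sum_le_sum fun j _ => mul_le_mul_of_nonneg_left (hxy j) (hM i j)

lemma vecMul_nonneg {a b : ℕ} {M : Matrix (Fin a) (Fin b) ℝ} (hM : EntryNonneg M)
    {x : Fin a → ℝ} (hx : 0 ≤ x) : 0 ≤ Matrix.vecMul x M := by
  intro j
  simp only [Matrix.vecMul, dotProduct, Pi.zero_apply]
  exact Finset.sum_nonneg fun i _ => mul_nonneg (hx i) (hM i j)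

lemma vecMul_mono {a b : ℕ} {M : Matrix (Fin a) (Fin b) ℝ} (hM : EntryNonneg M)
    {x y : Fin a → ℝ} (hxy : x ≤ y) : Matrix.vecMul x M ≤ Matrix.vecMul y M := by
  intro j
  simp only [Matrix.vecMul, dotProduct]
  exact Finset.sum_le_sum fun i _ => mul_le_mul_of_nonneg_right (hxy i) (hM i j)

lemma exists_eigen_of_specRad_pos {k : ℕ} {M : Matrix (Fin k) (Fin k) ℝ}
    (h : 0 < specRad M) : ∃ μ : ℂ, IsEigen M μ ∧ ‖μ‖ = specRad M := by
  have hne : {r : ℝ | ∃ μ : ℂ, IsEigen M μ ∧ r = ‖μ‖}.Nonempty := by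
    by_contra hcon
    rw [Set.not_nonempty_iff_eq_empty] at hcon
    have : specRad M = 0 := by unfold specRad; rw [hcon, Real.sSup_empty]
    rw [this] at h; exact lt_irrefl 0 h
  obtain ⟨μ, hμ, heq⟩ := hne.csSup_mem (eigenSet_finite M)
  exact ⟨μ, hμ, heq.symm⟩

lemma exists_subinv_right {k : ℕ} {M : Matrix (Fin k) (Fin k) ℝ} (hM : EntryNonneg M)
    (hpos : 0 < specRad M) :
    ∃ x : Fin k → ℝ, 0 ≤ x ∧ x ≠ 0 ∧ specRad M • x ≤ M.mulVec x := by
  obtain ⟨μ, hμ, habs⟩ := exists_eigen_of_specRad_pos hpos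
  obtain ⟨z, hz, hzeq⟩ := isEigen_iff_exists_right.mp hμ
  refine ⟨fun i => ‖z i‖, fun i => norm_nonneg _, ?_, ?_⟩
  · intro hcon
    apply hz
    funext i
    have := congrFun hcon i
    simpa using this
  · intro i
    have h1 : specRad M * ‖z i‖ = ‖μ * z i‖ := by
      rw [norm_mul, habs]
    have h2 : μ * z i = ∑ j, (cx M) i j * z j := by
      have := congrFun hzeq i
      simp only [Matrix.mulVec, dotProduct, Pi.smul_apply, smul_eq_mul] at this
      rw [this]
    have h3 : ‖∑ j, (cx M) i j * z j‖ ≤ ∑ j, M i j * ‖z j‖ := by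
      refine le_trans (norm_sum_le _ _) (le_of_eq ?_)
      apply Finset.sum_congr rfl
      intro j _
      rw [norm_mul]
      congr 1
      simp only [cx, Matrix.map_apply]
      rw [show (algebraMap ℝ ℂ) (M i j) = ((M i j : ℝ) : ℂ) from rfl, Complex.norm_real, Real.norm_eq_abs,
        abs_of_nonneg (hM i j)]
    simp only [Pi.smul_apply, smul_eq_mul, Matrix.mulVec, dotProduct]
    calc specRad M * ‖z i‖ = ‖μ * z i‖ := h1
      _ = ‖∑ j, (cx M) i j * z j‖ := by rw [h2]
      _ ≤ ∑ j, M i j * ‖z j‖ := h3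

lemma exists_subinv_left {k : ℕ} {M : Matrix (Fin k) (Fin k) ℝ} (hM : EntryNonneg M)
    (hpos : 0 < specRad M) :
    ∃ y : Fin k → ℝ, 0 ≤ y ∧ y ≠ 0 ∧ specRad M • y ≤ Matrix.vecMul y M := by
  obtain ⟨μ, hμ, habs⟩ := exists_eigen_of_specRad_pos hpos
  obtain ⟨z, hz, hzeq⟩ := isEigen_iff_exists_left.mp hμ
  refine ⟨fun i => ‖z i‖, fun i => norm_nonneg _, ?_, ?_⟩
  · intro hcon
    apply hz
    funext i
    have := congrFun hcon i
    simpa using this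
  · intro j
    have h1 : specRad M * ‖z j‖ = ‖μ * z j‖ := by
      rw [norm_mul, habs]
    have h2 : μ * z j = ∑ i, z i * (cx M) i j := by
      have := congrFun hzeq j
      simp only [Matrix.vecMul, dotProduct, Pi.smul_apply, smul_eq_mul] at this
      rw [this]
    have h3 : ‖∑ i, z i * (cx M) i j‖ ≤ ∑ i, ‖z i‖ * M i j := by
      refine le_trans (norm_sum_le _ _) (le_of_eq ?_)
      apply Finset.sum_congr rfl
      intro i _
      rw [norm_mul]
      congr 1
      simp only [cx, Matrix.map_apply]
      rw [show (algebraMap ℝ ℂ) (M i j) = ((M i j : ℝ) : ℂ) from rfl, Complex.norm_real, Real.norm_eq_abs,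
        abs_of_nonneg (hM i j)]
    simp only [Pi.smul_apply, smul_eq_mul, Matrix.vecMul, dotProduct]
    calc specRad M * ‖z j‖ = ‖μ * z j‖ := h1
      _ = ‖∑ i, z i * (cx M) i j‖ := by rw [h2]
      _ ≤ ∑ i, ‖z i‖ * M i j := h3

lemma le_specRad_of_subinv_right {k : ℕ} {M : Matrix (Fin k) (Fin k) ℝ} (hM : EntryNonneg M)
    {x : Fin k → ℝ} (hx0 : 0 ≤ x) (hxne : x ≠ 0) {c : ℝ}
    (hsub : c • x ≤ M.mulVec x) : c ≤ specRad M := by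
  by_contra hcon
  push_neg at hcon
  have hc : 0 < c := lt_of_le_of_lt (specRad_nonneg M) hcon
  have hpow : ∀ N : ℕ, (c ^ N) • x ≤ (M ^ N).mulVec x := by
    intro N
    induction N with
    | zero => simp [Matrix.one_mulVec]
    | succ N ih =>
      have h1 : (M ^ (N + 1)).mulVec x = M.mulVec ((M ^ N).mulVec x) := by
        rw [pow_succ']
        rw [← Matrix.mulVec_mulVec]
      rw [h1]
      calc (c ^ (N + 1)) • x = c • ((c ^ N) • x) := by rw [smul_smul, pow_succ']
        _ ≤ c • (M ^ N).mulVec x := by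
            intro i
            simp only [Pi.smul_apply, smul_eq_mul]
            exact mul_le_mul_of_nonneg_left (ih i) hc.le
        _ ≤ M.mulVec ((M ^ N).mulVec x) := by
            have := mulVec_mono hM (x := c • x) (y := M.mulVec x) hsub
            calc c • (M ^ N).mulVec x = (M ^ N).mulVec (c • x) := by
                  rw [Matrix.mulVec_smul]
              _ ≤ (M ^ N).mulVec (M.mulVec x) := by
                  rcases Nat.eq_zero_or_pos N with hN | hN
                  · subst hN; simpa [Matrix.one_mulVec] using hsub
                  · exact mulVec_mono (entryNonneg_pow hM N hN) hsub
              _ = M.mulVec ((M ^ N).mulVec x) := by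
                  rw [Matrix.mulVec_mulVec, Matrix.mulVec_mulVec, ← pow_succ, ← pow_succ']
  obtain ⟨i, hi⟩ : ∃ i, 0 < x i := by
    by_contra hcon2
    push_neg at hcon2
    apply hxne
    funext i
    exact le_antisymm (hcon2 i) (hx0 i)
  have hineq : ∀ N : ℕ, x i ≤ ∑ j, (|(M ^ N) i j| / c ^ N) * x j := by
    intro N
    have h1 : c ^ N * x i ≤ ∑ j, (M ^ N) i j * x j := by
      have := hpow N i
      simpa [Matrix.mulVec, dotProduct] using this
    have hcN : (0 : ℝ) < c ^ N := by positivity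
    calc x i = c ^ N * x i / c ^ N := by field_simp
      _ ≤ (∑ j, (M ^ N) i j * x j) / c ^ N := by gcongr
      _ = ∑ j, ((M ^ N) i j / c ^ N) * x j := by
          rw [Finset.sum_div]
          exact Finset.sum_congr rfl fun j _ => by ring
      _ ≤ ∑ j, (|(M ^ N) i j| / c ^ N) * x j := by
          apply Finset.sum_le_sum
          intro j _
          apply mul_le_mul_of_nonneg_right _ (hx0 j)
          exact by gcongr; exact le_abs_self _
  have ht : Tendsto (fun N : ℕ => ∑ j, (|(M ^ N) i j| / c ^ N) * x j) atTop (𝓝 0) := by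
    have : Tendsto (fun N : ℕ => ∑ j, (|(M ^ N) i j| / c ^ N) * x j) atTop
        (𝓝 (∑ j : Fin k, 0 * x j)) := by
      apply tendsto_finset_sum
      intro j _
      exact (pow_entry_div_tendsto hcon i j).mul_const (x j)
    simpa using this
  have := ge_of_tendsto ht (Filter.Eventually.of_forall hineq)
  linarith

end StmtAux
namespace StmtAux
open Filter Topology

lemma le_specRad_of_subinv_left {k : ℕ} {M : Matrix (Fin k) (Fin k) ℝ} (hM : EntryNonneg M)
    {x : Fin k → ℝ} (hx0 : 0 ≤ x) (hxne : x ≠ 0) {c : ℝ}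
    (hsub : c • x ≤ Matrix.vecMul x M) : c ≤ specRad M := by
  by_contra hcon
  push_neg at hcon
  have hc : 0 < c := lt_of_le_of_lt (specRad_nonneg M) hcon
  have hpow : ∀ N : ℕ, (c ^ N) • x ≤ Matrix.vecMul x (M ^ N) := by
    intro N
    induction N with
    | zero => simp [Matrix.vecMul_one]
    | succ N ih =>
      have h1 : Matrix.vecMul x (M ^ (N + 1)) = Matrix.vecMul (Matrix.vecMul x (M ^ N)) M := by
        rw [pow_succ, ← Matrix.vecMul_vecMul]
      rw [h1]
      calc (c ^ (N + 1)) • x = c ^ N • (c • x) := by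
            rw [smul_smul, pow_succ]
        _ ≤ c ^ N • Matrix.vecMul x M := by
            intro i
            simp only [Pi.smul_apply, smul_eq_mul]
            exact mul_le_mul_of_nonneg_left (hsub i) (by positivity)
        _ = Matrix.vecMul (c ^ N • x) M := by rw [Matrix.smul_vecMul]
        _ ≤ Matrix.vecMul (Matrix.vecMul x (M ^ N)) M := vecMul_mono hM ih
  obtain ⟨i, hi⟩ : ∃ i, 0 < x i := by
    by_contra hcon2
    push_neg at hcon2
    exact hxne (funext fun i => le_antisymm (hcon2 i) (hx0 i))
  have hineq : ∀ N : ℕ, x i ≤ ∑ l, x l * (|(M ^ N) l i| / c ^ N) := by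
    intro N
    have h1 : c ^ N * x i ≤ ∑ l, x l * (M ^ N) l i := by
      have := hpow N i
      simpa [Matrix.vecMul, dotProduct] using this
    have hcN : (0 : ℝ) < c ^ N := by positivity
    calc x i = c ^ N * x i / c ^ N := by field_simp
      _ ≤ (∑ l, x l * (M ^ N) l i) / c ^ N := by gcongr
      _ = ∑ l, x l * ((M ^ N) l i / c ^ N) := by
          rw [Finset.sum_div]
          exact Finset.sum_congr rfl fun l _ => by ring
      _ ≤ ∑ l, x l * (|(M ^ N) l i| / c ^ N) := by
          apply Finset.sum_le_sum
          intro l _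
          apply mul_le_mul_of_nonneg_left _ (hx0 l)
          exact by gcongr; exact le_abs_self _
  have ht : Tendsto (fun N : ℕ => ∑ l, x l * (|(M ^ N) l i| / c ^ N)) atTop (𝓝 0) := by
    have : Tendsto (fun N : ℕ => ∑ l, x l * (|(M ^ N) l i| / c ^ N)) atTop
        (𝓝 (∑ l : Fin k, x l * 0)) := by
      apply tendsto_finset_sum
      intro l _
      exact (pow_entry_div_tendsto hcon l i).const_mul (x l)
    simpa using this
  have := ge_of_tendsto ht (Filter.Eventually.of_forall hineq)
  linarith

lemma specRad_lt_one_of_pow_tendsto {k : ℕ} {M : Matrix (Fin k) (Fin k) ℝ}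
    (h : ∀ i j, Tendsto (fun N : ℕ => (M ^ N) i j) atTop (𝓝 0)) : specRad M < 1 := by
  rcases eq_or_lt_of_le (specRad_nonneg M) with hz | hpos
  · rw [← hz]; norm_num
  obtain ⟨μ, hμ, habs⟩ := exists_eigen_of_specRad_pos hpos
  obtain ⟨z, hz, hzeq⟩ := isEigen_iff_exists_right.mp hμ
  have hiter : ∀ N : ℕ, ((cx M) ^ N).mulVec z = μ ^ N • z := by
    intro N
    induction N with
    | zero => simp [Matrix.one_mulVec]
    | succ N ih =>
      rw [pow_succ', ← Matrix.mulVec_mulVec, ih, Matrix.mulVec_smul, hzeq, smul_smul]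
      rw [show μ ^ N * μ = μ ^ (N + 1) by rw [pow_succ]]
  obtain ⟨i, hi⟩ : ∃ i, z i ≠ 0 := by
    by_contra hcon
    push_neg at hcon
    exact hz (funext hcon)
  have hent : ∀ N : ℕ, μ ^ N * z i = ∑ j, (((M ^ N) i j : ℝ) : ℂ) * z j := by
    intro N
    have := congrFun (hiter N) i
    simp only [Matrix.mulVec, dotProduct, Pi.smul_apply, smul_eq_mul] at this
    rw [← this, ← cx_pow]
    rfl
  have ht : Tendsto (fun N : ℕ => ∑ j, (((M ^ N) i j : ℝ) : ℂ) * z j) atTop (𝓝 0) := by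
    have : Tendsto (fun N : ℕ => ∑ j, (((M ^ N) i j : ℝ) : ℂ) * z j) atTop
        (𝓝 (∑ j : Fin k, ((0 : ℝ) : ℂ) * z j)) := by
      apply tendsto_finset_sum
      intro j _
      exact (((Complex.continuous_ofReal.tendsto 0).comp (h i j))).mul_const (z j)
    simpa using this
  have ht2 : Tendsto (fun N : ℕ => μ ^ N * z i) atTop (𝓝 0) := by
    have : (fun N : ℕ => μ ^ N * z i) = fun N : ℕ => ∑ j, (((M ^ N) i j : ℝ) : ℂ) * z j :=
      funext hent
    rw [this]; exact ht
  by_contra hge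
  push_neg at hge
  have habs1 : ∀ N : ℕ, ‖z i‖ ≤ ‖μ ^ N * z i‖ := by
    intro N
    rw [norm_mul, norm_pow]
    nth_rewrite 1 [show ‖z i‖ = 1 * ‖z i‖ by ring]
    apply mul_le_mul_of_nonneg_right _ (norm_nonneg _)
    apply one_le_pow₀
    rw [habs]; exact hge
  have ht3 : Tendsto (fun N : ℕ => ‖μ ^ N * z i‖) atTop (𝓝 0) := by
    have := ht2.norm
    simpa using this
  have := ge_of_tendsto ht3 (Filter.Eventually.of_forall habs1)
  have : ‖z i‖ = 0 := le_antisymm this (norm_nonneg _)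
  exact hi (by simpa using this)

lemma isEigen_mul_comm {a b : ℕ} {A : Matrix (Fin a) (Fin b) ℝ} {B : Matrix (Fin b) (Fin a) ℝ}
    {μ : ℂ} (hμ : μ ≠ 0) (h : IsEigen (A * B) μ) : IsEigen (B * A) μ := by
  rw [isEigen_iff_det, cx_mul] at h ⊢
  have key : ∀ (p : ℕ) (X : Matrix (Fin p) (Fin p) ℂ),
      μ • (1 : Matrix (Fin p) (Fin p) ℂ) - X = μ • (1 - μ⁻¹ • X) := by
    intro p X
    rw [smul_sub, smul_smul, mul_inv_cancel₀ hμ, one_smul]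
  rw [key a (cx A * cx B)] at h
  rw [key b (cx B * cx A)]
  rw [Matrix.det_smul] at h
  rw [Matrix.det_smul]
  have hfact : (1 : Matrix (Fin b) (Fin b) ℂ) - μ⁻¹ • (cx B * cx A)
      = 1 - (μ⁻¹ • cx B) * cx A := by rw [Matrix.smul_mul]
  have hfact2 : (1 : Matrix (Fin a) (Fin a) ℂ) - μ⁻¹ • (cx A * cx B)
      = 1 - cx A * (μ⁻¹ • cx B) := by rw [Matrix.mul_smul]
  rw [hfact, ← Matrix.det_one_sub_mul_comm, ← hfact2]
  have hdet : ((1 : Matrix (Fin a) (Fin a) ℂ) - μ⁻¹ • (cx A * cx B)).det = 0 := by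
    have hμpow : μ ^ Fintype.card (Fin a) ≠ 0 := pow_ne_zero _ hμ
    exact (mul_eq_zero.mp h).resolve_left hμpow
  rw [hdet, mul_zero]

lemma specRad_mul_comm {a b : ℕ} {A : Matrix (Fin a) (Fin b) ℝ} {B : Matrix (Fin b) (Fin a) ℝ}
    (hpos : 0 < specRad (A * B)) : specRad (A * B) = specRad (B * A) := by
  obtain ⟨μ, hμ, habs⟩ := exists_eigen_of_specRad_pos hpos
  have hμne : μ ≠ 0 := by
    intro hcon
    rw [hcon] at habs
    simp at habs
    rw [← habs] at hpos
    exact lt_irrefl 0 hpos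
  have h1 : specRad (A * B) ≤ specRad (B * A) := by
    rw [← habs]
    exact abs_le_specRad (isEigen_mul_comm hμne hμ)
  have hpos2 : 0 < specRad (B * A) := lt_of_lt_of_le hpos h1
  obtain ⟨ν, hν, habs2⟩ := exists_eigen_of_specRad_pos hpos2
  have hνne : ν ≠ 0 := by
    intro hcon
    rw [hcon] at habs2
    simp at habs2
    rw [← habs2] at hpos2
    exact lt_irrefl 0 hpos2
  have h2 : specRad (B * A) ≤ specRad (A * B) := by
    rw [← habs2]
    exact abs_le_specRad (isEigen_mul_comm hνne hν)
  exact le_antisymm h1 h2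

end StmtAux
namespace StmtAux
open Filter Topology

lemma matrix_ext_mulVec {a b : ℕ} {M N : Matrix (Fin a) (Fin b) ℝ}
    (h : ∀ v, M.mulVec v = N.mulVec v) : M = N := by
  ext i j
  simpa [Matrix.mulVec_single] using congrFun (h (Pi.single j 1)) i

lemma sym_idem_eq_of_range {p : ℕ} {P Q : Matrix (Fin p) (Fin p) ℝ}
    (hP2 : P * P = P) (hPt : Pᵀ = P) (hQ2 : Q * Q = Q) (hQt : Qᵀ = Q)
    (hr : LinearMap.range P.mulVecLin = LinearMap.range Q.mulVecLin) : P = Q := by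
  have hPQ : P * Q = Q := by
    apply matrix_ext_mulVec
    intro v
    rw [← Matrix.mulVec_mulVec]
    have hmem : Q.mulVec v ∈ LinearMap.range P.mulVecLin := by
      rw [hr]
      exact ⟨v, by rw [Matrix.mulVecLin_apply]⟩
    obtain ⟨y, hy⟩ := hmem
    rw [Matrix.mulVecLin_apply] at hy
    rw [← hy, Matrix.mulVec_mulVec, hP2]
  have hQP : Q * P = P := by
    apply matrix_ext_mulVec
    intro v
    rw [← Matrix.mulVec_mulVec]
    have hmem : P.mulVec v ∈ LinearMap.range Q.mulVecLin := by
      rw [← hr]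
      exact ⟨v, by rw [Matrix.mulVecLin_apply]⟩
    obtain ⟨y, hy⟩ := hmem
    rw [Matrix.mulVecLin_apply] at hy
    rw [← hy, Matrix.mulVec_mulVec, hQ2]
  have h2 : P * Q = P := by
    have := congrArg Matrix.transpose hQP
    rw [Matrix.transpose_mul, hPt, hQt] at this
    exact this
  rw [← h2, hPQ]

lemma range_proj_eq {a b : ℕ} {A : Matrix (Fin a) (Fin b) ℝ} {Ad : Matrix (Fin b) (Fin a) ℝ}
    (h1 : A * Ad * A = A) :
    LinearMap.range (A * Ad).mulVecLin = LinearMap.range A.mulVecLin := by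
  apply le_antisymm
  · intro x hx
    obtain ⟨v, hv⟩ := LinearMap.mem_range.mp hx
    rw [Matrix.mulVecLin_apply] at hv
    refine LinearMap.mem_range.mpr ⟨Ad.mulVec v, ?_⟩
    rw [Matrix.mulVecLin_apply, Matrix.mulVec_mulVec, ← hv]
  · intro x hx
    obtain ⟨v, hv⟩ := LinearMap.mem_range.mp hx
    rw [Matrix.mulVecLin_apply] at hv
    refine LinearMap.mem_range.mpr ⟨A.mulVec v, ?_⟩
    rw [Matrix.mulVecLin_apply, Matrix.mulVec_mulVec, h1, hv]

lemma ker_proj_eq {a b : ℕ} {A : Matrix (Fin a) (Fin b) ℝ} {Ad : Matrix (Fin b) (Fin a) ℝ}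
    (h1 : A * Ad * A = A) :
    LinearMap.ker (Ad * A).mulVecLin = LinearMap.ker A.mulVecLin := by
  apply le_antisymm
  · intro x hx
    rw [LinearMap.mem_ker, Matrix.mulVecLin_apply] at hx ⊢
    have : A.mulVec x = (A * (Ad * A)).mulVec x := by
      rw [← Matrix.mul_assoc, h1]
    rw [this, ← Matrix.mulVec_mulVec, hx, Matrix.mulVec_zero]
  · intro x hx
    rw [LinearMap.mem_ker, Matrix.mulVecLin_apply] at hx ⊢
    rw [← Matrix.mulVec_mulVec, hx, Matrix.mulVec_zero]

lemma range_one_sub_eq_ker {p : ℕ} {P : Matrix (Fin p) (Fin p) ℝ} (hP2 : P * P = P) :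
    LinearMap.range (1 - P).mulVecLin = LinearMap.ker P.mulVecLin := by
  apply le_antisymm
  · intro x hx
    obtain ⟨v, hv⟩ := LinearMap.mem_range.mp hx
    rw [Matrix.mulVecLin_apply] at hv
    rw [LinearMap.mem_ker, Matrix.mulVecLin_apply, ← hv, Matrix.mulVec_mulVec,
      Matrix.mul_sub, Matrix.mul_one, hP2, sub_self, Matrix.zero_mulVec]
  · intro x hx
    rw [LinearMap.mem_ker, Matrix.mulVecLin_apply] at hx
    refine LinearMap.mem_range.mpr ⟨x, ?_⟩
    rw [Matrix.mulVecLin_apply, Matrix.sub_mulVec, Matrix.one_mulVec, hx, sub_zero]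

lemma sym_idem_eq_of_ker {p : ℕ} {P Q : Matrix (Fin p) (Fin p) ℝ}
    (hP2 : P * P = P) (hPt : Pᵀ = P) (hQ2 : Q * Q = Q) (hQt : Qᵀ = Q)
    (hk : LinearMap.ker P.mulVecLin = LinearMap.ker Q.mulVecLin) : P = Q := by
  have hP2' : (1 - P) * (1 - P) = 1 - P := by
    simp only [Matrix.sub_mul, Matrix.mul_sub, Matrix.one_mul, Matrix.mul_one, hP2]
    abel
  have hQ2' : (1 - Q) * (1 - Q) = 1 - Q := by
    simp only [Matrix.sub_mul, Matrix.mul_sub, Matrix.one_mul, Matrix.mul_one, hQ2]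
    abel
  have hPt' : (1 - P)ᵀ = 1 - P := by rw [Matrix.transpose_sub, Matrix.transpose_one, hPt]
  have hQt' : (1 - Q)ᵀ = 1 - Q := by rw [Matrix.transpose_sub, Matrix.transpose_one, hQt]
  have hr : LinearMap.range (1 - P).mulVecLin = LinearMap.range (1 - Q).mulVecLin := by
    rw [range_one_sub_eq_ker hP2, range_one_sub_eq_ker hQ2, hk]
  have := sym_idem_eq_of_range hP2' hPt' hQ2' hQt' hr
  have h2 := congrArg (fun X => (1 : Matrix (Fin p) (Fin p) ℝ) - X) this
  simpa using h2

lemma mp_identities {mm nn : ℕ} {A U V : Matrix (Fin mm) (Fin nn) ℝ}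
    {Ad Ud : Matrix (Fin nn) (Fin mm) ℝ}
    (hps : ProperSplitting A U V) (hA : IsMP A Ad) (hU : IsMP U Ud) :
    Ad = Ud + (Ud * V) * Ad ∧ Ad = Ud + Ad * (V * Ud) := by
  obtain ⟨hAUV, hrange, hker⟩ := hps
  obtain ⟨hA1, hA2, hA3, hA4⟩ := hA
  obtain ⟨hU1, hU2, hU3, hU4⟩ := hU
  have hAAd2 : (A * Ad) * (A * Ad) = A * Ad := by
    rw [← Matrix.mul_assoc, hA1]
  have hUUd2 : (U * Ud) * (U * Ud) = U * Ud := by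
    rw [← Matrix.mul_assoc, hU1]
  have hAdA2 : (Ad * A) * (Ad * A) = Ad * A := by
    rw [← Matrix.mul_assoc, hA2]
  have hUdU2 : (Ud * U) * (Ud * U) = Ud * U := by
    rw [← Matrix.mul_assoc, hU2]
  have hProj1 : A * Ad = U * Ud := by
    apply sym_idem_eq_of_range hAAd2 hA3 hUUd2 hU3
    rw [range_proj_eq hA1, range_proj_eq hU1, hrange]
  have hProj2 : Ad * A = Ud * U := by
    apply sym_idem_eq_of_ker hAdA2 hA4 hUdU2 hU4
    rw [ker_proj_eq hA1, ker_proj_eq hU1, hker]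
  have hV : V = U - A := by rw [hAUV]; abel
  have key1 : Ud * U * Ad = Ad := by
    rw [← hProj2, Matrix.mul_assoc, ← Matrix.mul_assoc, hA2]
  have key2 : Ud * A * Ad = Ud := by
    rw [Matrix.mul_assoc, hProj1, ← Matrix.mul_assoc, hU2]
  have key3 : Ad * U * Ud = Ad := by
    rw [Matrix.mul_assoc, ← hProj1, ← Matrix.mul_assoc, hA2]
  have key4 : Ad * A * Ud = Ud := by
    rw [hProj2, hU2]
  constructor
  · have : (Ud * V) * Ad = Ad - Ud := by
      rw [hV, Matrix.mul_sub, Matrix.sub_mul, key1, key2]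
    rw [this]
    abel
  · have : Ad * (V * Ud) = Ad - Ud := by
      rw [hV, Matrix.sub_mul, Matrix.mul_sub, ← Matrix.mul_assoc, ← Matrix.mul_assoc, key3, key4]
    rw [this]
    abel

end StmtAux
namespace StmtAux
open Filter Topology

lemma cx_add {a b : ℕ} (A B : Matrix (Fin a) (Fin b) ℝ) : cx (A + B) = cx A + cx B := by
  ext i j; simp [cx]

lemma dom_series_left {mm nn : ℕ} {Ad Ud : Matrix (Fin nn) (Fin mm) ℝ}
    {V : Matrix (Fin mm) (Fin nn) ℝ}
    (hAd : EntryNonneg Ad) (hUd : EntryNonneg Ud) (hQ : EntryNonneg (Ud * V))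
    (hid : Ad = Ud + (Ud * V) * Ad) :
    ∀ i j, Tendsto (fun N : ℕ => ((Ud * V) ^ N) i j) atTop (𝓝 0) := by
  set Q := Ud * V with hQdef
  have hiter : ∀ N : ℕ, Ad = (∑ k ∈ Finset.range N, Q ^ k) * Ud + Q ^ N * Ad := by
    intro N
    induction N with
    | zero => simp
    | succ N ih =>
      nth_rewrite 1 [ih]
      rw [Finset.sum_range_succ, Matrix.add_mul, add_assoc]
      congr 1
      nth_rewrite 1 [hid]
      rw [Matrix.mul_add, ← Matrix.mul_assoc, ← pow_succ]
  have hterm : ∀ i j, Tendsto (fun N : ℕ => (Q ^ N * Ud) i j) atTop (𝓝 0) := by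
    intro i j
    have hnn : ∀ N : ℕ, 0 ≤ (Q ^ N * Ud) i j := by
      intro N
      rcases Nat.eq_zero_or_pos N with hN | hN
      · subst hN; simpa using hUd i j
      · exact entryNonneg_mul (entryNonneg_pow hQ N hN) hUd i j
    have hbdd : ∀ N : ℕ, ∑ k ∈ Finset.range N, (Q ^ k * Ud) i j ≤ Ad i j := by
      intro N
      have h1 := congrFun (congrFun (hiter N) i) j
      have h2 : ((∑ k ∈ Finset.range N, Q ^ k) * Ud) i j
          = ∑ k ∈ Finset.range N, (Q ^ k * Ud) i j := by
        rw [Matrix.sum_mul]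
        exact Matrix.sum_apply i j _ _
      have h3 : 0 ≤ (Q ^ N * Ad) i j := by
        rcases Nat.eq_zero_or_pos N with hN | hN
        · subst hN; simpa using hAd i j
        · exact entryNonneg_mul (entryNonneg_pow hQ N hN) hAd i j
      rw [Matrix.add_apply, h2] at h1
      linarith
    have hsum : Summable (fun N : ℕ => (Q ^ N * Ud) i j) :=
      summable_of_sum_range_le hnn hbdd
    exact hsum.tendsto_atTop_zero
  intro i j
  have hshift : Tendsto (fun N : ℕ => (Q ^ (N + 1)) i j) atTop (𝓝 0) := by
    have heq : ∀ N : ℕ, (Q ^ (N + 1)) i j = ∑ l, (Q ^ N * Ud) i l * V l j := by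
      intro N
      rw [pow_succ, hQdef, ← Matrix.mul_assoc]
      exact Matrix.mul_apply
    rw [show (fun N : ℕ => (Q ^ (N + 1)) i j)
        = fun N : ℕ => ∑ l, (Q ^ N * Ud) i l * V l j from funext heq]
    have : Tendsto (fun N : ℕ => ∑ l, (Q ^ N * Ud) i l * V l j) atTop
        (𝓝 (∑ l : Fin mm, 0 * V l j)) := by
      apply tendsto_finset_sum
      intro l _
      exact (hterm i l).mul_const _
    simpa using this
  exact (tendsto_add_atTop_iff_nat 1).mp hshift

lemma dom_series_right {mm nn : ℕ} {Ad Ud : Matrix (Fin nn) (Fin mm) ℝ}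
    {V : Matrix (Fin mm) (Fin nn) ℝ}
    (hAd : EntryNonneg Ad) (hUd : EntryNonneg Ud) (hR : EntryNonneg (V * Ud))
    (hid : Ad = Ud + Ad * (V * Ud)) :
    ∀ i j, Tendsto (fun N : ℕ => ((V * Ud) ^ N) i j) atTop (𝓝 0) := by
  set R := V * Ud with hRdef
  have hiter : ∀ N : ℕ, Ad = Ud * (∑ k ∈ Finset.range N, R ^ k) + Ad * R ^ N := by
    intro N
    induction N with
    | zero => simp
    | succ N ih =>
      nth_rewrite 1 [ih]
      rw [Finset.sum_range_succ, Matrix.mul_add, add_assoc]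
      congr 1
      nth_rewrite 1 [hid]
      rw [Matrix.add_mul, Matrix.mul_assoc, ← pow_succ']
  have hterm : ∀ i j, Tendsto (fun N : ℕ => (Ud * R ^ N) i j) atTop (𝓝 0) := by
    intro i j
    have hnn : ∀ N : ℕ, 0 ≤ (Ud * R ^ N) i j := by
      intro N
      rcases Nat.eq_zero_or_pos N with hN | hN
      · subst hN; simpa using hUd i j
      · exact entryNonneg_mul hUd (entryNonneg_pow hR N hN) i j
    have hbdd : ∀ N : ℕ, ∑ k ∈ Finset.range N, (Ud * R ^ k) i j ≤ Ad i j := by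
      intro N
      have h1 := congrFun (congrFun (hiter N) i) j
      have h2 : (Ud * (∑ k ∈ Finset.range N, R ^ k)) i j
          = ∑ k ∈ Finset.range N, (Ud * R ^ k) i j := by
        rw [Matrix.mul_sum]
        exact Matrix.sum_apply i j _ _
      have h3 : 0 ≤ (Ad * R ^ N) i j := by
        rcases Nat.eq_zero_or_pos N with hN | hN
        · subst hN; simpa using hAd i j
        · exact entryNonneg_mul hAd (entryNonneg_pow hR N hN) i j
      rw [Matrix.add_apply, h2] at h1
      linarith
    exact (summable_of_sum_range_le hnn hbdd).tendsto_atTop_zero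
  intro i j
  have hshift : Tendsto (fun N : ℕ => (R ^ (N + 1)) i j) atTop (𝓝 0) := by
    have heq : ∀ N : ℕ, (R ^ (N + 1)) i j = ∑ l, V i l * (Ud * R ^ N) l j := by
      intro N
      rw [pow_succ', hRdef, Matrix.mul_assoc]
      exact Matrix.mul_apply
    rw [show (fun N : ℕ => (R ^ (N + 1)) i j)
        = fun N : ℕ => ∑ l, V i l * (Ud * R ^ N) l j from funext heq]
    have : Tendsto (fun N : ℕ => ∑ l, V i l * (Ud * R ^ N) l j) atTop
        (𝓝 (∑ l : Fin nn, V i l * 0)) := by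
      apply tendsto_finset_sum
      intro l _
      exact (hterm l j).const_mul _
    simpa using this
  exact (tendsto_add_atTop_iff_nat 1).mp hshift

lemma geom_iter {k : ℕ} {P Q : Matrix (Fin k) (Fin k) ℝ} (hid : P = Q + Q * P) :
    ∀ N : ℕ, P = (∑ l ∈ Finset.range N, Q ^ (l + 1)) + Q ^ N * P := by
  intro N
  induction N with
  | zero => simp
  | succ N ih =>
    nth_rewrite 1 [ih]
    rw [Finset.sum_range_succ, add_assoc]
    congr 1
    nth_rewrite 1 [hid]
    rw [Matrix.mul_add, ← pow_succ, ← Matrix.mul_assoc, ← pow_succ]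

lemma geom_tendsto {k : ℕ} {P Q : Matrix (Fin k) (Fin k) ℝ} (hid : P = Q + Q * P)
    (hpow : ∀ i j, Tendsto (fun N : ℕ => (Q ^ N) i j) atTop (𝓝 0)) (i j : Fin k) :
    Tendsto (fun N : ℕ => (∑ l ∈ Finset.range N, Q ^ (l + 1)) i j) atTop (𝓝 (P i j)) := by
  have heq : ∀ N : ℕ, (∑ l ∈ Finset.range N, Q ^ (l + 1)) i j
      = P i j - ∑ l, (Q ^ N) i l * P l j := by
    intro N
    have h1 := congrFun (congrFun (geom_iter hid N) i) j
    rw [Matrix.add_apply] at h1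
    rw [show (Q ^ N * P) i j = ∑ l, (Q ^ N) i l * P l j from Matrix.mul_apply] at h1
    linarith
  rw [funext heq]
  have h2 : Tendsto (fun N : ℕ => ∑ l, (Q ^ N) i l * P l j) atTop
      (𝓝 (∑ l : Fin k, 0 * P l j)) := by
    apply tendsto_finset_sum
    intro l _
    exact (hpow i l).mul_const _
  have h3 : Tendsto (fun N : ℕ => ∑ l, (Q ^ N) i l * P l j) atTop (𝓝 0) := by simpa using h2
  simpa using (tendsto_const_nhds (x := P i j)).sub h3

lemma geom_nonneg_le {k : ℕ} {P Q : Matrix (Fin k) (Fin k) ℝ} (hQ : EntryNonneg Q)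
    (hid : P = Q + Q * P)
    (hpow : ∀ i j, Tendsto (fun N : ℕ => (Q ^ N) i j) atTop (𝓝 0)) :
    EntryNonneg P ∧ ∀ (N : ℕ) (i j : Fin k), (∑ l ∈ Finset.range N, Q ^ (l + 1)) i j ≤ P i j := by
  have hparts : ∀ (N : ℕ) (i j : Fin k), 0 ≤ (∑ l ∈ Finset.range N, Q ^ (l + 1)) i j := by
    intro N i j
    rw [Matrix.sum_apply]
    exact Finset.sum_nonneg fun l _ => entryNonneg_pow hQ (l + 1) (Nat.succ_le_succ (Nat.zero_le l)) i j
  constructor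
  · intro i j
    exact ge_of_tendsto (geom_tendsto hid hpow i j) (Filter.Eventually.of_forall fun N => hparts N i j)
  · intro N i j
    apply ge_of_tendsto (geom_tendsto hid hpow i j)
    filter_upwards [eventually_ge_atTop N] with M hM
    rw [Matrix.sum_apply, Matrix.sum_apply]
    apply Finset.sum_le_sum_of_subset_of_nonneg (Finset.range_subset_range.mpr hM)
    intro l _ _
    exact entryNonneg_pow hQ (l + 1) (Nat.succ_le_succ (Nat.zero_le l)) i j

end StmtAux
namespace StmtAux
open Filter Topology

lemma pow_subinv_right {k : ℕ} {Q : Matrix (Fin k) (Fin k) ℝ} (hQ : EntryNonneg Q)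
    {x : Fin k → ℝ} {ρ : ℝ} (hρ0 : 0 ≤ ρ) (hsub : ρ • x ≤ Q.mulVec x) :
    ∀ N : ℕ, (ρ ^ N) • x ≤ (Q ^ N).mulVec x := by
  intro N
  induction N with
  | zero => simp [Matrix.one_mulVec]
  | succ N ih =>
    have h1 : (Q ^ (N + 1)).mulVec x = (Q ^ N).mulVec (Q.mulVec x) := by
      rw [pow_succ, ← Matrix.mulVec_mulVec]
    rw [h1]
    calc (ρ ^ (N + 1)) • x = ρ ^ N • (ρ • x) := by rw [smul_smul, pow_succ]
      _ ≤ ρ ^ N • Q.mulVec x := by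
          intro i
          simp only [Pi.smul_apply, smul_eq_mul]
          exact mul_le_mul_of_nonneg_left (hsub i) (by positivity)
      _ = Q.mulVec (ρ ^ N • x) := by rw [Matrix.mulVec_smul]
      _ ≤ Q.mulVec ((Q ^ N).mulVec x) := mulVec_mono hQ ih
      _ = (Q ^ N).mulVec (Q.mulVec x) := by
          rw [Matrix.mulVec_mulVec, Matrix.mulVec_mulVec, ← pow_succ, ← pow_succ']

lemma mulVec_le_of_entry_le {a b : ℕ} {M P : Matrix (Fin a) (Fin b) ℝ}
    (h : ∀ i j, M i j ≤ P i j) {x : Fin b → ℝ} (hx : 0 ≤ x) : M.mulVec x ≤ P.mulVec x := by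
  intro i
  simp only [Matrix.mulVec, dotProduct]
  exact Finset.sum_le_sum fun j _ => mul_le_mul_of_nonneg_right (h i j) (hx j)

lemma geom_mulVec_lower {k : ℕ} {P Q : Matrix (Fin k) (Fin k) ℝ} (hQ : EntryNonneg Q)
    (hple : ∀ (N : ℕ) (i j : Fin k), (∑ l ∈ Finset.range N, Q ^ (l + 1)) i j ≤ P i j)
    {x : Fin k → ℝ} (hx0 : 0 ≤ x) {ρ : ℝ} (hρ0 : 0 ≤ ρ) (hρ1 : ρ < 1)
    (hsub : ρ • x ≤ Q.mulVec x) :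
    (ρ / (1 - ρ)) • x ≤ P.mulVec x := by
  have hlow : ∀ (N : ℕ) (i : Fin k), (∑ l ∈ Finset.range N, ρ ^ (l + 1)) * x i
      ≤ (P.mulVec x) i := by
    intro N i
    have h1 : ((∑ l ∈ Finset.range N, Q ^ (l + 1)).mulVec x) i ≤ (P.mulVec x) i :=
      mulVec_le_of_entry_le (hple N) hx0 i
    have h2 : ((∑ l ∈ Finset.range N, Q ^ (l + 1)).mulVec x) i
        = ∑ l ∈ Finset.range N, ((Q ^ (l + 1)).mulVec x) i := by
      simp only [Matrix.mulVec, dotProduct, Matrix.sum_apply, Finset.sum_mul]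
      rw [Finset.sum_comm]
    have h3 : (∑ l ∈ Finset.range N, ρ ^ (l + 1)) * x i
        ≤ ∑ l ∈ Finset.range N, ((Q ^ (l + 1)).mulVec x) i := by
      rw [Finset.sum_mul]
      apply Finset.sum_le_sum
      intro l _
      have := pow_subinv_right hQ hρ0 hsub (l + 1) i
      simpa [smul_eq_mul] using this
    linarith
  intro i
  simp only [Pi.smul_apply, smul_eq_mul]
  have hgeo : Tendsto (fun N : ℕ => (∑ l ∈ Finset.range N, ρ ^ (l + 1)) * x i) atTop
      (𝓝 (ρ / (1 - ρ) * x i)) := by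
    have h1 : Tendsto (fun N : ℕ => ∑ l ∈ Finset.range N, ρ ^ l) atTop (𝓝 (1 - ρ)⁻¹) :=
      (hasSum_geometric_of_lt_one hρ0 hρ1).tendsto_sum_nat
    have h2 : ∀ N : ℕ, ρ * (∑ l ∈ Finset.range N, ρ ^ l) = ∑ l ∈ Finset.range N, ρ ^ (l + 1) := by
      intro N
      rw [Finset.mul_sum]
      exact Finset.sum_congr rfl fun l _ => by rw [pow_succ']
    have h3 : Tendsto (fun N : ℕ => ∑ l ∈ Finset.range N, ρ ^ (l + 1)) atTop
        (𝓝 (ρ * (1 - ρ)⁻¹)) := (h1.const_mul ρ).congr h2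
    have h4 : ρ * (1 - ρ)⁻¹ = ρ / (1 - ρ) := by rw [div_eq_mul_inv]
    rw [← h4]
    exact h3.mul_const (x i)
  exact le_of_tendsto hgeo (Filter.Eventually.of_forall fun N => hlow N i)

lemma lt_of_f_lt_f {s t : ℝ} (hs0 : 0 ≤ s) (hs1 : s < 1) (ht0 : 0 ≤ t) (ht1 : t < 1)
    (h : s / (1 - s) < t / (1 - t)) : s < t := by
  by_contra hc
  push_neg at hc
  have h2 : t / (1 - t) ≤ s / (1 - s) := by
    rw [div_le_div_iff₀ (by linarith) (by linarith)]
    nlinarith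
  linarith

lemma specRad_geom_le {k : ℕ} {R S : Matrix (Fin k) (Fin k) ℝ}
    (hid1 : S = R + R * S) (hid2 : S = R + S * R) (hR : specRad R < 1) :
    specRad S ≤ specRad R / (1 - specRad R) := by
  have hR0 := specRad_nonneg R
  have hden : 0 < 1 - specRad R := by linarith
  rcases eq_or_lt_of_le (specRad_nonneg S) with hz | hpos
  · rw [← hz]; positivity
  obtain ⟨lam, hlam, habs⟩ := exists_eigen_of_specRad_pos hpos
  have hSc1 : cx R + cx R * cx S = cx S := by
    rw [← cx_mul, ← cx_add, ← hid1]
  have hSc2 : cx R + cx S * cx R = cx S := by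
    rw [← cx_mul, ← cx_add, ← hid2]
  have hdet1 : ((1 : Matrix (Fin k) (Fin k) ℂ) - cx R) * (1 + cx S) = 1 := by
    have hexp : ((1 : Matrix (Fin k) (Fin k) ℂ) - cx R) * (1 + cx S)
        = 1 + cx S - (cx R + cx R * cx S) := by
      simp only [Matrix.sub_mul, Matrix.mul_add, Matrix.one_mul, Matrix.mul_one]
      abel
    rw [hexp, hSc1]
    abel
  have hdetS : (1 + cx S).det ≠ 0 := by
    intro hcon
    have := congrArg Matrix.det hdet1
    rw [Matrix.det_mul, hcon, mul_zero, Matrix.det_one] at this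
    norm_num at this
  have hlamne : lam ≠ -1 := by
    intro hcon
    obtain ⟨z, hz, hzeq⟩ := isEigen_iff_exists_right.mp hlam
    have : (1 + cx S).mulVec z = 0 := by
      rw [Matrix.add_mulVec, Matrix.one_mulVec, hzeq, hcon]
      funext i
      simp
    exact hdetS (Matrix.exists_mulVec_eq_zero_iff.mp ⟨z, hz, this⟩)
  have h1lam : (1 : ℂ) + lam ≠ 0 := by
    intro hcon
    apply hlamne
    linear_combination hcon
  set μ : ℂ := lam / (1 + lam) with hμdef
  have h1μ : (1 : ℂ) - μ = 1 / (1 + lam) := by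
    rw [hμdef]
    field_simp
    ring
  have h1μne : (1 : ℂ) - μ ≠ 0 := by
    rw [h1μ]
    exact div_ne_zero one_ne_zero h1lam
  have hlamrec : lam = μ / (1 - μ) := by
    rw [h1μ, hμdef]
    field_simp
  have hRS : cx R * (1 + cx S) = cx S := by
    rw [Matrix.mul_add, Matrix.mul_one, hSc1]
  have hkey : (μ • (1 : Matrix (Fin k) (Fin k) ℂ) - cx R) * (1 + cx S)
      = (1 - μ) • (lam • (1 : Matrix (Fin k) (Fin k) ℂ) - cx S) := by
    have harith : (1 - μ) * lam = μ := by
      rw [hlamrec]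
      field_simp
    have hlhs : (μ • (1 : Matrix (Fin k) (Fin k) ℂ) - cx R) * (1 + cx S)
        = μ • (1 : Matrix (Fin k) (Fin k) ℂ) + μ • cx S - cx S := by
      rw [Matrix.sub_mul, Matrix.smul_mul, Matrix.one_mul, hRS, smul_add]
    have hrhs : (1 - μ) • (lam • (1 : Matrix (Fin k) (Fin k) ℂ) - cx S)
        = μ • (1 : Matrix (Fin k) (Fin k) ℂ) + μ • cx S - cx S := by
      rw [smul_sub, smul_smul, harith, sub_smul, one_smul]
      abel
    rw [hlhs, hrhs]
  have hdetR : (μ • (1 : Matrix (Fin k) (Fin k) ℂ) - cx R).det = 0 := by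
    have h1 := congrArg Matrix.det hkey
    rw [Matrix.det_mul, Matrix.det_smul] at h1
    rw [isEigen_iff_det.mp hlam, mul_zero] at h1
    exact (mul_eq_zero.mp h1).resolve_right hdetS
  have hμeig : IsEigen R μ := isEigen_iff_det.mpr hdetR
  have hμle : ‖μ‖ ≤ specRad R := abs_le_specRad hμeig
  have hμlt1 : ‖μ‖ < 1 := lt_of_le_of_lt hμle hR
  have habs1μ : 1 - ‖μ‖ ≤ ‖1 - μ‖ := by
    have := norm_sub_norm_le (1 : ℂ) μ
    simpa using this
  have hlamabs : ‖lam‖ ≤ ‖μ‖ / (1 - ‖μ‖) := by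
    rw [hlamrec, norm_div]
    gcongr
  have hfinal : ‖μ‖ / (1 - ‖μ‖) ≤ specRad R / (1 - specRad R) := by
    rw [div_le_div_iff₀ (by linarith) hden]
    nlinarith [norm_nonneg μ]
  rw [← habs]
  exact le_trans (le_trans hlamabs hfinal) (le_refl _)

end StmtAux
set_option maxHeartbeats 1000000 in
open StmtAux Filter Topology in
theorem stmt6 {m n : ℕ} (A₁ A₂ U₁ U₂ V : Matrix (Fin m) (Fin n) ℝ)
    (A₁d A₂d U₁d U₂d : Matrix (Fin n) (Fin m) ℝ)
    (hps1 : ProperSplitting A₁ U₁ V) (hps2 : ProperSplitting A₂ U₂ V)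
    (hA1 : IsMP A₁ A₁d) (hA2 : IsMP A₂ A₂d) (hU1 : IsMP U₁ U₁d) (hU2 : IsMP U₂ U₂d)
    (hU1d : EntryNonneg U₁d) (hU2d : EntryNonneg U₂d)
    (htypes : (EntryNonneg (U₁d * V) ∧ EntryNonneg (V * U₂d)) ∨
              (EntryNonneg (V * U₁d) ∧ EntryNonneg (U₂d * V)))
    (hr1 : 0 < specRad (U₁d * V)) (hr2 : 0 < specRad (U₂d * V))
    (hV : V ≠ 0) (hlt : EntryLT A₁d A₂d) (hA1d : EntryNonneg A₁d) :
    specRad (U₁d * V) < specRad (U₂d * V) ∧ specRad (U₂d * V) < 1 := by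
  obtain ⟨id1a, id1b⟩ := mp_identities hps1 hA1 hU1
  obtain ⟨id2a, id2b⟩ := mp_identities hps2 hA2 hU2
  have hA2d : EntryNonneg A₂d := fun i j => le_of_lt (lt_of_le_of_lt (hA1d i j) (hlt i j))
  rcases htypes with ⟨hQ1, hR2⟩ | ⟨hR1, hQ2⟩
  · -- Case 1 : splitting 1 of type I, splitting 2 of type II
    have hQ1pow := dom_series_left hA1d hU1d hQ1 id1a
    have hρ1lt : specRad (U₁d * V) < 1 := specRad_lt_one_of_pow_tendsto hQ1pow
    have hR2pow := dom_series_right hA2d hU2d hR2 id2b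
    have hρR2lt : specRad (V * U₂d) < 1 := specRad_lt_one_of_pow_tendsto hR2pow
    have hρ2eq : specRad (U₂d * V) = specRad (V * U₂d) := specRad_mul_comm hr2
    have goal2 : specRad (U₂d * V) < 1 := by rw [hρ2eq]; exact hρR2lt
    refine ⟨?_, goal2⟩
    -- P₁ = A₁d * V
    have idP1 : A₁d * V = U₁d * V + (U₁d * V) * (A₁d * V) := by
      nth_rewrite 1 [id1a]
      rw [Matrix.add_mul]
      congr 1
      simp only [Matrix.mul_assoc]
    obtain ⟨hP1nonneg, hP1ge⟩ := geom_nonneg_le hQ1 idP1 hQ1pow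
    obtain ⟨x, hx0, hxne, hxsub⟩ := exists_subinv_right hQ1 hr1
    have hgeom := geom_mulVec_lower hQ1 hP1ge hx0 (specRad_nonneg _) hρ1lt hxsub
    have hf1pos : 0 < specRad (U₁d * V) / (1 - specRad (U₁d * V)) :=
      div_pos hr1 (by linarith)
    have hρ'ge : specRad (U₁d * V) / (1 - specRad (U₁d * V)) ≤ specRad (A₁d * V) :=
      le_specRad_of_subinv_right hP1nonneg hx0 hxne hgeom
    have hρ'pos : 0 < specRad (A₁d * V) := lt_of_lt_of_le hf1pos hρ'ge
    obtain ⟨y, hy0, hyne, hysub⟩ := exists_subinv_left hP1nonneg hρ'pos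
    obtain ⟨i₀, hi₀⟩ : ∃ i, 0 < y i := by
      by_contra hcon
      push_neg at hcon
      exact hyne (funext fun i => le_antisymm (hcon i) (hy0 i))
    have hz0 : 0 ≤ Matrix.vecMul y A₁d := vecMul_nonneg hA1d hy0
    have hzV : specRad (A₁d * V) • y ≤ Matrix.vecMul (Matrix.vecMul y A₁d) V := by
      rw [Matrix.vecMul_vecMul]
      exact hysub
    have hzne : Matrix.vecMul y A₁d ≠ 0 := by
      intro hcon
      have h0 := hzV i₀
      rw [hcon, Matrix.zero_vecMul] at h0
      simp only [Pi.smul_apply, smul_eq_mul, Pi.zero_apply] at h0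
      nlinarith
    have hwz : ∀ j, Matrix.vecMul y A₁d j < Matrix.vecMul y A₂d j := by
      intro j
      simp only [Matrix.vecMul, dotProduct]
      apply Finset.sum_lt_sum
      · intro i _
        exact mul_le_mul_of_nonneg_left (le_of_lt (hlt i j)) (hy0 i)
      · exact ⟨i₀, Finset.mem_univ i₀, mul_lt_mul_of_pos_left (hlt i₀ j) hi₀⟩
    have idS2 : V * A₂d = V * U₂d + (V * U₂d) * (V * A₂d) := by
      nth_rewrite 1 [id2a]
      rw [Matrix.mul_add]
      congr 1
      simp only [Matrix.mul_assoc]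
    obtain ⟨hS2nonneg, -⟩ := geom_nonneg_le hR2 idS2 hR2pow
    obtain ⟨j₀, hj₀⟩ : ∃ j, 0 < Matrix.vecMul y A₁d j := by
      by_contra hcon
      push_neg at hcon
      exact hzne (funext fun j => le_antisymm (hcon j) (hz0 j))
    haveI : Nonempty (Fin m) := ⟨j₀⟩
    have hKz : ∀ j, Matrix.vecMul y A₁d j ≤
        Finset.univ.sup' Finset.univ_nonempty (Matrix.vecMul y A₁d) :=
      fun j => Finset.le_sup' _ (Finset.mem_univ j)
    have hK0 : 0 < Finset.univ.sup' Finset.univ_nonempty (Matrix.vecMul y A₁d) :=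
      lt_of_lt_of_le hj₀ (hKz j₀)
    have hεle : ∀ j, Finset.univ.inf' Finset.univ_nonempty
        (fun j => Matrix.vecMul y A₂d j - Matrix.vecMul y A₁d j)
        ≤ Matrix.vecMul y A₂d j - Matrix.vecMul y A₁d j :=
      fun j => Finset.inf'_le _ (Finset.mem_univ j)
    have hε0 : 0 < Finset.univ.inf' Finset.univ_nonempty
        (fun j => Matrix.vecMul y A₂d j - Matrix.vecMul y A₁d j) := by
      rw [Finset.lt_inf'_iff]
      exact fun j _ => sub_pos.mpr (hwz j)
    set K := Finset.univ.sup' Finset.univ_nonempty (Matrix.vecMul y A₁d) with hKdef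
    set ε := Finset.univ.inf' Finset.univ_nonempty
        (fun j => Matrix.vecMul y A₂d j - Matrix.vecMul y A₁d j) with hεdef
    set ρ' := specRad (A₁d * V) with hρ'def
    have hcgt : ρ' < ρ' * (1 + ε / K) := by
      have h1 : 0 < ε / K := div_pos hε0 hK0
      nlinarith
    have hsubS2 : (ρ' * (1 + ε / K)) • Matrix.vecMul y A₁d
        ≤ Matrix.vecMul (Matrix.vecMul y A₁d) (V * A₂d) := by
      intro j
      have h1 : Matrix.vecMul (Matrix.vecMul (Matrix.vecMul y A₁d) V) A₂d
          = Matrix.vecMul (Matrix.vecMul y A₁d) (V * A₂d) := by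
        rw [Matrix.vecMul_vecMul]
      have h2 : Matrix.vecMul (ρ' • y) A₂d ≤
          Matrix.vecMul (Matrix.vecMul (Matrix.vecMul y A₁d) V) A₂d :=
        vecMul_mono hA2d hzV
      have h3 : Matrix.vecMul (ρ' • y) A₂d = ρ' • Matrix.vecMul y A₂d := by
        rw [Matrix.smul_vecMul]
      have h4 : (ρ' * (1 + ε / K)) * Matrix.vecMul y A₁d j
          ≤ ρ' * Matrix.vecMul y A₂d j := by
        have h5 : (ε / K) * Matrix.vecMul y A₁d j ≤ ε := by
          rw [div_mul_eq_mul_div, div_le_iff₀ hK0]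
          exact mul_le_mul_of_nonneg_left (hKz j) hε0.le
        have h6 := hεle j
        have h7 := hz0 j
        nlinarith [hρ'pos.le]
      calc ((ρ' * (1 + ε / K)) • Matrix.vecMul y A₁d) j
          = (ρ' * (1 + ε / K)) * Matrix.vecMul y A₁d j := rfl
        _ ≤ ρ' * Matrix.vecMul y A₂d j := h4
        _ = Matrix.vecMul (ρ' • y) A₂d j := by rw [h3]; rfl
        _ ≤ Matrix.vecMul (Matrix.vecMul (Matrix.vecMul y A₁d) V) A₂d j := h2 j
        _ = Matrix.vecMul (Matrix.vecMul y A₁d) (V * A₂d) j := by rw [h1]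
    have hcle : ρ' * (1 + ε / K) ≤ specRad (V * A₂d) :=
      le_specRad_of_subinv_left hS2nonneg hz0 hzne hsubS2
    have idS2b : V * A₂d = V * U₂d + (V * A₂d) * (V * U₂d) := by
      nth_rewrite 1 [id2b]
      rw [Matrix.mul_add]
      congr 1
      simp only [Matrix.mul_assoc]
    have hupper := specRad_geom_le idS2 idS2b hρR2lt
    have hchain : specRad (U₁d * V) / (1 - specRad (U₁d * V))
        < specRad (V * U₂d) / (1 - specRad (V * U₂d)) :=
      lt_of_le_of_lt hρ'ge (lt_of_lt_of_le hcgt (le_trans hcle hupper))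
    have hfin := lt_of_f_lt_f (specRad_nonneg _) hρ1lt (specRad_nonneg _) hρR2lt hchain
    rw [hρ2eq]
    exact hfin
  · -- Case 2 : splitting 1 of type II, splitting 2 of type I
    have hR1pow := dom_series_right hA1d hU1d hR1 id1b
    have hρR1lt : specRad (V * U₁d) < 1 := specRad_lt_one_of_pow_tendsto hR1pow
    have hρ1eq : specRad (U₁d * V) = specRad (V * U₁d) := specRad_mul_comm hr1
    have hQ2pow := dom_series_left hA2d hU2d hQ2 id2a
    have goal2 : specRad (U₂d * V) < 1 := specRad_lt_one_of_pow_tendsto hQ2pow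
    refine ⟨?_, goal2⟩
    have hρR1pos : 0 < specRad (V * U₁d) := hρ1eq ▸ hr1
    have idS1 : V * A₁d = V * U₁d + (V * U₁d) * (V * A₁d) := by
      nth_rewrite 1 [id1a]
      rw [Matrix.mul_add]
      congr 1
      simp only [Matrix.mul_assoc]
    obtain ⟨hS1nonneg, hS1ge⟩ := geom_nonneg_le hR1 idS1 hR1pow
    obtain ⟨x, hx0, hxne, hxsub⟩ := exists_subinv_right hR1 hρR1pos
    have hgeom := geom_mulVec_lower hR1 hS1ge hx0 (specRad_nonneg _) hρR1lt hxsub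
    have hf1pos : 0 < specRad (V * U₁d) / (1 - specRad (V * U₁d)) :=
      div_pos hρR1pos (by linarith)
    have hρ''ge : specRad (V * U₁d) / (1 - specRad (V * U₁d)) ≤ specRad (V * A₁d) :=
      le_specRad_of_subinv_right hS1nonneg hx0 hxne hgeom
    have hρ''pos : 0 < specRad (V * A₁d) := lt_of_lt_of_le hf1pos hρ''ge
    obtain ⟨x', hx'0, hx'ne, hx'sub⟩ := exists_subinv_right hS1nonneg hρ''pos
    obtain ⟨i₀, hi₀⟩ : ∃ i, 0 < x' i := by
      by_contra hcon
      push_neg at hcon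
      exact hx'ne (funext fun i => le_antisymm (hcon i) (hx'0 i))
    have hz0 : 0 ≤ A₁d.mulVec x' := mulVec_nonneg hA1d hx'0
    have hVz : specRad (V * A₁d) • x' ≤ V.mulVec (A₁d.mulVec x') := by
      rw [Matrix.mulVec_mulVec]
      exact hx'sub
    have hzne : A₁d.mulVec x' ≠ 0 := by
      intro hcon
      have h0 := hVz i₀
      rw [hcon, Matrix.mulVec_zero] at h0
      simp only [Pi.smul_apply, smul_eq_mul, Pi.zero_apply] at h0
      nlinarith
    have hwz : ∀ i, A₁d.mulVec x' i < A₂d.mulVec x' i := by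
      intro i
      simp only [Matrix.mulVec, dotProduct]
      apply Finset.sum_lt_sum
      · intro j _
        exact mul_le_mul_of_nonneg_right (le_of_lt (hlt i j)) (hx'0 j)
      · exact ⟨i₀, Finset.mem_univ i₀, mul_lt_mul_of_pos_right (hlt i i₀) hi₀⟩
    have idP2 : A₂d * V = U₂d * V + (U₂d * V) * (A₂d * V) := by
      nth_rewrite 1 [id2a]
      rw [Matrix.add_mul]
      congr 1
      simp only [Matrix.mul_assoc]
    obtain ⟨hP2nonneg, -⟩ := geom_nonneg_le hQ2 idP2 hQ2pow
    obtain ⟨j₀, hj₀⟩ : ∃ j, 0 < A₁d.mulVec x' j := by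
      by_contra hcon
      push_neg at hcon
      exact hzne (funext fun j => le_antisymm (hcon j) (hz0 j))
    haveI : Nonempty (Fin n) := ⟨j₀⟩
    have hKz : ∀ j, A₁d.mulVec x' j ≤
        Finset.univ.sup' Finset.univ_nonempty (A₁d.mulVec x') :=
      fun j => Finset.le_sup' _ (Finset.mem_univ j)
    have hK0 : 0 < Finset.univ.sup' Finset.univ_nonempty (A₁d.mulVec x') :=
      lt_of_lt_of_le hj₀ (hKz j₀)
    have hεle : ∀ j, Finset.univ.inf' Finset.univ_nonempty
        (fun j => A₂d.mulVec x' j - A₁d.mulVec x' j)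
        ≤ A₂d.mulVec x' j - A₁d.mulVec x' j :=
      fun j => Finset.inf'_le _ (Finset.mem_univ j)
    have hε0 : 0 < Finset.univ.inf' Finset.univ_nonempty
        (fun j => A₂d.mulVec x' j - A₁d.mulVec x' j) := by
      rw [Finset.lt_inf'_iff]
      exact fun j _ => sub_pos.mpr (hwz j)
    set K := Finset.univ.sup' Finset.univ_nonempty (A₁d.mulVec x') with hKdef
    set ε := Finset.univ.inf' Finset.univ_nonempty
        (fun j => A₂d.mulVec x' j - A₁d.mulVec x' j) with hεdef
    set ρ' := specRad (V * A₁d) with hρ'def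
    have hcgt : ρ' < ρ' * (1 + ε / K) := by
      have h1 : 0 < ε / K := div_pos hε0 hK0
      nlinarith
    have hsubP2 : (ρ' * (1 + ε / K)) • A₁d.mulVec x'
        ≤ (A₂d * V).mulVec (A₁d.mulVec x') := by
      intro j
      have h1 : A₂d.mulVec (V.mulVec (A₁d.mulVec x')) = (A₂d * V).mulVec (A₁d.mulVec x') := by
        rw [Matrix.mulVec_mulVec]
      have h2 : A₂d.mulVec (ρ' • x') ≤ A₂d.mulVec (V.mulVec (A₁d.mulVec x')) :=
        mulVec_mono hA2d hVz
      have h3 : A₂d.mulVec (ρ' • x') = ρ' • A₂d.mulVec x' := by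
        rw [Matrix.mulVec_smul]
      have h4 : (ρ' * (1 + ε / K)) * A₁d.mulVec x' j ≤ ρ' * A₂d.mulVec x' j := by
        have h5 : (ε / K) * A₁d.mulVec x' j ≤ ε := by
          rw [div_mul_eq_mul_div, div_le_iff₀ hK0]
          exact mul_le_mul_of_nonneg_left (hKz j) hε0.le
        have h6 := hεle j
        have h7 := hz0 j
        nlinarith [hρ''pos.le]
      calc ((ρ' * (1 + ε / K)) • A₁d.mulVec x') j
          = (ρ' * (1 + ε / K)) * A₁d.mulVec x' j := rfl
        _ ≤ ρ' * A₂d.mulVec x' j := h4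
        _ = A₂d.mulVec (ρ' • x') j := by rw [h3]; rfl
        _ ≤ A₂d.mulVec (V.mulVec (A₁d.mulVec x')) j := h2 j
        _ = (A₂d * V).mulVec (A₁d.mulVec x') j := by rw [← h1]
    have hcle : ρ' * (1 + ε / K) ≤ specRad (A₂d * V) :=
      le_specRad_of_subinv_right hP2nonneg hz0 hzne hsubP2
    have idP2b : A₂d * V = U₂d * V + (A₂d * V) * (U₂d * V) := by
      nth_rewrite 1 [id2b]
      rw [Matrix.add_mul]
      congr 1
      simp only [Matrix.mul_assoc]
    have hupper := specRad_geom_le idP2 idP2b goal2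
    have hchain : specRad (V * U₁d) / (1 - specRad (V * U₁d))
        < specRad (U₂d * V) / (1 - specRad (U₂d * V)) :=
      lt_of_le_of_lt hρ''ge (lt_of_lt_of_le hcgt (le_trans hcle hupper))
    have hfin := lt_of_f_lt_f (specRad_nonneg _) hρR1lt (specRad_nonneg _) goal2 hchain
    rw [hρ1eq]
    exact hfin
end

section
/- Let (U_k, V_k, E_k), k = 1,…,p, be a proper weak regular multisplitting of A ∈ ℝ^{m×n}, and set H = Σ_{k=1}^p E_k U_k† V_k. Then H ≥ 0, and Σ_{k=1}^p E_k U_k† A = (I - H) A† A. -/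
open Matrix Polynomial

lemma aux_ker {m n q : ℕ} (A B : Matrix (Fin m) (Fin n) ℝ)
    (h : LinearMap.ker A.mulVecLin ≤ LinearMap.ker B.mulVecLin)
    (M : Matrix (Fin n) (Fin q) ℝ) (hM : A * M = 0) : B * M = 0 := by
  ext i j
  have hv : A.mulVecLin (fun l => M l j) = 0 := by
    funext i'
    have := congrFun (congrFun hM i') j
    simpa [Matrix.mul_apply, Matrix.mulVecLin_apply, Matrix.mulVec, dotProduct] using this
  have hb : B.mulVecLin (fun l => M l j) = 0 := h (LinearMap.mem_ker.mpr hv)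
  have := congrFun hb i
  simpa [Matrix.mul_apply, Matrix.mulVecLin_apply, Matrix.mulVec, dotProduct] using this

theorem stmt13 {m n p : ℕ} (A : Matrix (Fin m) (Fin n) ℝ)
    (U V : Fin p → Matrix (Fin m) (Fin n) ℝ) (Ud : Fin p → Matrix (Fin n) (Fin m) ℝ)
    (E : Fin p → Matrix (Fin n) (Fin n) ℝ)
    (Ad : Matrix (Fin n) (Fin m) ℝ) (hA : IsMP A Ad)
    (hps : ∀ k, ProperSplitting A (U k) (V k)) (hU : ∀ k, IsMP (U k) (Ud k))
    (hE0 : ∀ k, EntryNonneg (E k)) (hEdiag : ∀ k, ∀ i j, i ≠ j → E k i j = 0)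
    (hEsum : ∑ k, E k = 1)
    (hUd : ∀ k, EntryNonneg (Ud k)) (hUdV : ∀ k, EntryNonneg (Ud k * V k)) :
    EntryNonneg (∑ k, E k * Ud k * V k) ∧
    ∑ k, E k * Ud k * A = (1 - ∑ k, E k * Ud k * V k) * (Ad * A) := by
  obtain ⟨hA1, hA2, hA3, hA4⟩ := hA
  set Q : Matrix (Fin n) (Fin n) ℝ := Ad * A with hQdef
  have hQQ : Q * Q = Q := by
    rw [hQdef, Matrix.mul_assoc, ← Matrix.mul_assoc A Ad A, hA1]
  have key : ∀ k, Ud k * U k = Q := by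
    intro k
    obtain ⟨hU1, hU2, hU3, hU4⟩ := hU k
    obtain ⟨hs1, hs2, hs3⟩ := hps k
    have hAQ0 : A * (Q - 1) = 0 := by
      rw [Matrix.mul_sub, Matrix.mul_one, hQdef, ← Matrix.mul_assoc, hA1, sub_self]
    have hUQ : U k * Q = U k := by
      have := aux_ker A (U k) (le_of_eq hs3.symm) _ hAQ0
      rwa [Matrix.mul_sub, Matrix.mul_one, sub_eq_zero] at this
    have hUP0 : U k * (Ud k * U k - 1) = 0 := by
      rw [Matrix.mul_sub, Matrix.mul_one, ← Matrix.mul_assoc, hU1, sub_self]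
    have hAP : A * (Ud k * U k) = A := by
      have := aux_ker (U k) A (le_of_eq hs3) _ hUP0
      rwa [Matrix.mul_sub, Matrix.mul_one, sub_eq_zero] at this
    have hPQ : Ud k * U k * Q = Ud k * U k := by
      rw [Matrix.mul_assoc, hUQ]
    have hQP : Q * (Ud k * U k) = Q := by
      rw [hQdef, Matrix.mul_assoc, hAP]
    calc Ud k * U k = Ud k * U k * Q := hPQ.symm
      _ = ((Ud k * U k * Q)ᵀ)ᵀ := (transpose_transpose _).symm
      _ = (Qᵀ * (Ud k * U k)ᵀ)ᵀ := by rw [Matrix.transpose_mul]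
      _ = (Q * (Ud k * U k))ᵀ := by rw [hU4, hA4]
      _ = Qᵀ := by rw [hQP]
      _ = Q := hA4
  have hUdA : ∀ k, Ud k * A = Q - Ud k * V k := by
    intro k
    rw [(hps k).1, Matrix.mul_sub, key k]
  have hfix : ∀ k, Ud k * V k * Q = Ud k * V k := by
    intro k
    have hAQ : A * Q = A := by rw [hQdef, ← Matrix.mul_assoc, hA1]
    have hUdVeq : Ud k * V k = Q - Ud k * A := by
      rw [hUdA k, sub_sub_cancel]
    rw [hUdVeq, Matrix.sub_mul, hQQ, Matrix.mul_assoc, hAQ]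
  constructor
  · intro i j
    rw [Matrix.sum_apply]
    apply Finset.sum_nonneg
    intro k _
    rw [Matrix.mul_assoc, Matrix.mul_apply]
    apply Finset.sum_nonneg
    intro l _
    exact mul_nonneg (hE0 k i l) (hUdV k l j)
  · have step : ∀ k, E k * Ud k * A = E k * Q - E k * Ud k * V k := by
      intro k
      rw [Matrix.mul_assoc, hUdA k, Matrix.mul_sub, Matrix.mul_assoc]
    calc ∑ k, E k * Ud k * A = ∑ k, (E k * Q - E k * Ud k * V k) :=
          Finset.sum_congr rfl (fun k _ => step k)
      _ = (∑ k, E k) * Q - ∑ k, E k * Ud k * V k := by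
          rw [Finset.sum_sub_distrib, Finset.sum_mul]
      _ = Q - ∑ k, E k * Ud k * V k := by rw [hEsum, Matrix.one_mul]
      _ = Q - (∑ k, E k * Ud k * V k) * Q := by
          rw [Finset.sum_mul]
          congr 1
          refine Finset.sum_congr rfl (fun k _ => ?_)
          rw [Matrix.mul_assoc (E k) (Ud k) (V k), Matrix.mul_assoc (E k) (Ud k * V k) Q,
            hfix k]
      _ = (1 - ∑ k, E k * Ud k * V k) * (Ad * A) := by
          rw [Matrix.sub_mul, Matrix.one_mul, hQdef]
end

section
/- Let (U_k, V_k, E_k), k = 1,…,p, be a proper weak regular multisplitting of a semimonotone matrix A ∈ ℝ^{m×n}. Then ρ(H) < 1, where H = Σ_{k=1}^p E_k U_k† V_k. -/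
open Matrix Polynomial

namespace Stmt14Aux

/-- product of entrywise nonneg matrices is entrywise nonneg -/
lemma mul_entry_nonneg {m n q : ℕ} {A : Matrix (Fin m) (Fin n) ℝ} {B : Matrix (Fin n) (Fin q) ℝ}
    (hA : ∀ i j, 0 ≤ A i j) (hB : ∀ i j, 0 ≤ B i j) : ∀ i j, 0 ≤ (A * B) i j := by
  intro i j
  rw [Matrix.mul_apply]
  exact Finset.sum_nonneg fun l _ => mul_nonneg (hA i l) (hB l j)

/-- transfer nullspace inclusions to matrix products -/
lemma transfer {m n q : ℕ} {A B : Matrix (Fin m) (Fin n) ℝ}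
    (h : ∀ v, A.mulVec v = 0 → B.mulVec v = 0) {M : Matrix (Fin n) (Fin q) ℝ}
    (hM : A * M = 0) : B * M = 0 := by
  ext i j
  have h1 : A.mulVec (fun l => M l j) = 0 := by
    ext i'
    have := congrFun (congrFun hM i') j
    simpa [Matrix.mul_apply, Matrix.mulVec, dotProduct] using this
  have := congrFun (h _ h1) i
  simpa [Matrix.mulVec, dotProduct, Matrix.mul_apply] using this

/-- column space inclusion gives a factorization -/
lemma factor {m n : ℕ} {A U : Matrix (Fin m) (Fin n) ℝ}
    (h : ∀ v : Fin n → ℝ, ∃ w, A.mulVec w = U.mulVec v) :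
    ∃ C : Matrix (Fin n) (Fin n) ℝ, A * C = U := by
  choose w hw using h
  refine ⟨Matrix.of fun i j => w (Pi.single j 1) i, ?_⟩
  ext i j
  have := congrFun (hw (Pi.single j 1)) i
  simp only [Matrix.mulVec_single, mul_one, MulOpposite.op_one, one_smul, Matrix.col_apply] at this
  rw [Matrix.mul_apply]
  simp only [Matrix.of_apply]
  rw [show ∑ l, A i l * w (Pi.single j 1) l = A.mulVec (w (Pi.single j 1)) i from rfl, this]

/-- a root of the characteristic polynomial has an eigenvector -/
lemma eigvec {n : ℕ} (M : Matrix (Fin n) (Fin n) ℂ) (μ : ℂ)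
    (h : (M.charpoly).IsRoot μ) :
    ∃ v : Fin n → ℂ, v ≠ 0 ∧ M.mulVec v = μ • v := by
  have hdet : ((Matrix.diagonal fun _ : Fin n => μ) - M).det = 0 := by
    have h2 := h
    rw [Polynomial.IsRoot, Matrix.charpoly, ← Polynomial.coe_evalRingHom,
      RingHom.map_det] at h2
    convert h2 using 2
    ext i j
    rw [RingHom.mapMatrix_apply, Matrix.map_apply, Matrix.charmatrix_apply]
    by_cases hij : i = j <;>
      simp [hij, Matrix.diagonal_apply, Matrix.sub_apply]
  obtain ⟨v, hv0, hv⟩ := (Matrix.exists_mulVec_eq_zero_iff).2 hdet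
  refine ⟨v, hv0, ?_⟩
  rw [Matrix.sub_mulVec] at hv
  have hd : (Matrix.diagonal fun _ : Fin n => μ).mulVec v = μ • v := by
    ext i
    rw [Matrix.mulVec_diagonal]
    simp
  rw [hd, sub_eq_zero] at hv
  exact hv.symm

end Stmt14Aux

theorem stmt14 {m n p : ℕ} (A : Matrix (Fin m) (Fin n) ℝ)
    (U V : Fin p → Matrix (Fin m) (Fin n) ℝ) (Ud : Fin p → Matrix (Fin n) (Fin m) ℝ)
    (E : Fin p → Matrix (Fin n) (Fin n) ℝ)
    (Ad : Matrix (Fin n) (Fin m) ℝ) (hA : IsMP A Ad) (hsemi : EntryNonneg Ad)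
    (hps : ∀ k, ProperSplitting A (U k) (V k)) (hU : ∀ k, IsMP (U k) (Ud k))
    (hE0 : ∀ k, EntryNonneg (E k)) (hEdiag : ∀ k, ∀ i j, i ≠ j → E k i j = 0)
    (hEsum : ∑ k, E k = 1)
    (hUd : ∀ k, EntryNonneg (Ud k)) (hUdV : ∀ k, EntryNonneg (Ud k * V k)) :
    specRad (∑ k, E k * Ud k * V k) < 1 := by
  obtain ⟨hA1, hA2, hA3, hA4⟩ := hA
  set H : Matrix (Fin n) (Fin n) ℝ := ∑ k, E k * Ud k * V k with hHdef
  set G : Matrix (Fin n) (Fin m) ℝ := ∑ k, E k * Ud k with hGdef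
  -- pointwise kernel equalities
  have hkerAU : ∀ (k) (v : Fin n → ℝ), A.mulVec v = 0 → (U k).mulVec v = 0 := by
    intro k v hv
    have hmem : v ∈ LinearMap.ker A.mulVecLin := by
      rw [LinearMap.mem_ker, Matrix.mulVecLin_apply]; exact hv
    rw [← (hps k).2.2, LinearMap.mem_ker, Matrix.mulVecLin_apply] at hmem
    exact hmem
  have hkerUA : ∀ (k) (v : Fin n → ℝ), (U k).mulVec v = 0 → A.mulVec v = 0 := by
    intro k v hv
    have hmem : v ∈ LinearMap.ker (U k).mulVecLin := by
      rw [LinearMap.mem_ker, Matrix.mulVecLin_apply]; exact hv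
    rw [(hps k).2.2, LinearMap.mem_ker, Matrix.mulVecLin_apply] at hmem
    exact hmem
  -- factorization U k = A * C
  have hfac : ∀ k, ∃ C : Matrix (Fin n) (Fin n) ℝ, A * C = U k := by
    intro k
    apply Stmt14Aux.factor
    intro v
    have hmem : (U k).mulVecLin v ∈ LinearMap.range A.mulVecLin := by
      rw [← (hps k).2.1]; exact ⟨v, rfl⟩
    obtain ⟨w, hw⟩ := hmem
    exact ⟨w, by simpa [Matrix.mulVecLin_apply] using hw⟩
  -- identity (2) : Ud k * (A * Ad) = Ud k
  have hUdAAd : ∀ k, Ud k * (A * Ad) = Ud k := by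
    intro k
    obtain ⟨C, hC⟩ := hfac k
    have hAAdU : A * Ad * U k = U k := by
      rw [← hC, ← Matrix.mul_assoc, hA1]
    have hRS : (A * Ad) * (U k * Ud k) = U k * Ud k := by
      rw [← Matrix.mul_assoc, hAAdU]
    have hSR : (U k * Ud k) * (A * Ad) = U k * Ud k := by
      have h1 := congrArg Matrix.transpose hRS
      rw [Matrix.transpose_mul, hA3, (hU k).2.2.1] at h1
      exact h1
    calc Ud k * (A * Ad) = (Ud k * U k * Ud k) * (A * Ad) := by rw [(hU k).2.1]
      _ = Ud k * ((U k * Ud k) * (A * Ad)) := by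
          rw [Matrix.mul_assoc (Ud k) (U k) (Ud k), Matrix.mul_assoc]
      _ = Ud k * (U k * Ud k) := by rw [hSR]
      _ = Ud k := by rw [← Matrix.mul_assoc, (hU k).2.1]
  -- identity (3) : Ud k * U k = Ad * A
  have hUdU : ∀ k, Ud k * U k = Ad * A := by
    intro k
    have hUZ : U k * (1 - Ad * A) = 0 := by
      apply Stmt14Aux.transfer (hkerAU k)
      rw [Matrix.mul_sub, Matrix.mul_one, ← Matrix.mul_assoc, hA1, sub_self]
    have hAW : A * (1 - Ud k * U k) = 0 := by
      apply Stmt14Aux.transfer (hkerUA k)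
      rw [Matrix.mul_sub, Matrix.mul_one, ← Matrix.mul_assoc, (hU k).1, sub_self]
    have hPQ : (Ud k * U k) * (Ad * A) = Ud k * U k := by
      have h : (Ud k * U k) * (1 - Ad * A) = 0 := by
        rw [Matrix.mul_assoc, hUZ, Matrix.mul_zero]
      rw [Matrix.mul_sub, Matrix.mul_one, sub_eq_zero] at h
      exact h.symm
    have hQP : (Ad * A) * (Ud k * U k) = Ad * A := by
      have h : (Ad * A) * (1 - Ud k * U k) = 0 := by
        rw [Matrix.mul_assoc, hAW, Matrix.mul_zero]
      rw [Matrix.mul_sub, Matrix.mul_one, sub_eq_zero] at h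
      exact h.symm
    have h1 := congrArg Matrix.transpose hQP
    rw [Matrix.transpose_mul, hA4, (hU k).2.2.2] at h1
    rw [← hPQ, h1]
  -- identity (6) : H * Ad = Ad - G
  have hHAd : H * Ad = Ad - G := by
    rw [hHdef, hGdef, Matrix.sum_mul]
    have hterm : ∀ k, (E k * Ud k * V k) * Ad = E k * Ad - E k * Ud k := by
      intro k
      have hV : V k = U k - A := by
        have := (hps k).1
        rw [this]; abel
      rw [hV, Matrix.mul_sub, Matrix.sub_mul]
      have h1 : E k * Ud k * U k * Ad = E k * Ad := by
        rw [Matrix.mul_assoc (E k) (Ud k) (U k), hUdU k, Matrix.mul_assoc, hA2]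
      have h2 : E k * Ud k * A * Ad = E k * Ud k := by
        rw [Matrix.mul_assoc (E k * Ud k) A Ad, Matrix.mul_assoc (E k) (Ud k) (A * Ad),
          hUdAAd k]
      rw [h1, h2]
    rw [Finset.sum_congr rfl (fun k _ => hterm k), Finset.sum_sub_distrib,
      ← Matrix.sum_mul, hEsum, Matrix.one_mul]
  -- identity (7) : partial sums
  have hInd : ∀ N : ℕ, (∑ j ∈ Finset.range N, H ^ j * G) + H ^ N * Ad = Ad := by
    intro N
    induction N with
    | zero => simp
    | succ N ih =>
      rw [Finset.sum_range_succ, pow_succ, Matrix.mul_assoc, hHAd, Matrix.mul_sub]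
      rw [show (∑ j ∈ Finset.range N, H ^ j * G) + H ^ N * G + (H ^ N * Ad - H ^ N * G)
        = (∑ j ∈ Finset.range N, H ^ j * G) + H ^ N * Ad from by abel, ih]
  -- nonnegativity facts
  have hHnn : ∀ i j, 0 ≤ H i j := by
    intro i j
    rw [hHdef, Matrix.sum_apply]
    refine Finset.sum_nonneg fun k _ => ?_
    rw [Matrix.mul_assoc]
    exact Stmt14Aux.mul_entry_nonneg (hE0 k) (hUdV k) i j
  have hHpow : ∀ (N : ℕ) i j, 0 ≤ (H ^ N) i j := by
    intro N
    induction N with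
    | zero => intro i j; by_cases h : i = j <;> simp [h, Matrix.one_apply]
    | succ N ih =>
      rw [pow_succ]
      exact Stmt14Aux.mul_entry_nonneg ih hHnn
  have hFnn : ∀ k i j, 0 ≤ (E k * Ud k) i j := fun k =>
    Stmt14Aux.mul_entry_nonneg (hE0 k) (hUd k)
  have hHFnn : ∀ (N : ℕ) k i j, 0 ≤ (H ^ N * (E k * Ud k)) i j := fun N k =>
    Stmt14Aux.mul_entry_nonneg (hHpow N) (hFnn k)
  -- the bound on partial sums
  have hbound : ∀ k i l (N : ℕ),
      ∑ j ∈ Finset.range N, (H ^ j * (E k * Ud k)) i l ≤ Ad i l := by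
    intro k i l N
    have h1 : (∑ j ∈ Finset.range N, (H ^ j * G) i l) + (H ^ N * Ad) i l = Ad i l := by
      have := congrFun (congrFun (hInd N) i) l
      rw [Matrix.add_apply, Matrix.sum_apply] at this
      exact this
    have h2 : (∑ j ∈ Finset.range N, (H ^ j * G) i l) ≤ Ad i l := by
      have := Stmt14Aux.mul_entry_nonneg (hHpow N) hsemi i l
      linarith
    refine le_trans (Finset.sum_le_sum fun j _ => ?_) h2
    have hsum : H ^ j * G = ∑ k', H ^ j * (E k' * Ud k') := by
      rw [hGdef, Matrix.mul_sum]
    rw [hsum, Matrix.sum_apply]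
    exact Finset.single_le_sum (f := fun k' => (H ^ j * (E k' * Ud k')) i l)
      (fun k' _ => hHFnn j k' i l) (Finset.mem_univ k)
  -- entrywise convergence of H^N * (E k * Ud k) to zero
  have htend : ∀ k i l,
      Filter.Tendsto (fun N : ℕ => (H ^ N * (E k * Ud k)) i l) Filter.atTop (nhds 0) := by
    intro k i l
    exact (summable_of_sum_range_le (fun N => hHFnn N k i l)
      (fun N => hbound k i l N)).tendsto_atTop_zero
  -- entrywise convergence of H^(N+1) to zero
  have hpowtend : ∀ i j,
      Filter.Tendsto (fun N : ℕ => (H ^ (N + 1)) i j) Filter.atTop (nhds 0) := by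
    intro i j
    have hdec : ∀ N : ℕ, (H ^ (N + 1)) i j
        = ∑ k, ∑ l, (H ^ N * (E k * Ud k)) i l * V k l j := by
      intro N
      have hsplit : H ^ (N + 1) = ∑ k, (H ^ N * (E k * Ud k)) * V k := by
        rw [pow_succ, hHdef, Matrix.mul_sum]
        refine Finset.sum_congr rfl fun k _ => ?_
        rw [← Matrix.mul_assoc, ← Matrix.mul_assoc]
      rw [hsplit, Matrix.sum_apply]
      refine Finset.sum_congr rfl fun k _ => ?_
      rw [Matrix.mul_apply]
    have hlim : Filter.Tendsto
        (fun N : ℕ => ∑ k, ∑ l, (H ^ N * (E k * Ud k)) i l * V k l j)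
        Filter.atTop (nhds (∑ k : Fin p, ∑ l : Fin m, (0 : ℝ))) := by
      refine tendsto_finset_sum _ fun k _ => ?_
      refine tendsto_finset_sum _ fun l _ => ?_
      simpa using (htend k i l).mul_const (V k l j)
    simp only [← hdec] at hlim
    simpa using hlim
  -- all eigenvalues have modulus < 1
  have heig : ∀ μ : ℂ, IsEigen H μ → ‖μ‖ < 1 := by
    intro μ hμ
    obtain ⟨v, hv0, hv⟩ := Stmt14Aux.eigvec (H.map (algebraMap ℝ ℂ)) μ hμ
    by_contra hge
    push_neg at hge
    obtain ⟨i, hvi⟩ : ∃ i, v i ≠ 0 := Function.ne_iff.1 hv0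
    have hpowv : ∀ N : ℕ, ((H ^ N).map (algebraMap ℝ ℂ)).mulVec v = (μ ^ N) • v := by
      intro N
      induction N with
      | zero => simp [Matrix.map_one (algebraMap ℝ ℂ) (map_zero _) (map_one _),
          Matrix.one_mulVec]
      | succ N ih =>
        rw [pow_succ, Matrix.map_mul, ← Matrix.mulVec_mulVec, hv, Matrix.mulVec_smul, ih,
          pow_succ, smul_smul, mul_comm]
    have hbig : ∀ N : ℕ, ‖v i‖
        ≤ ∑ l, (H ^ (N + 1)) i l * ‖v l‖ := by
      intro N
      have h1 : (μ ^ (N + 1)) * v i = ∑ l, algebraMap ℝ ℂ ((H ^ (N + 1)) i l) * v l := by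
        have h2 := congrFun (hpowv (N + 1)) i
        rw [Pi.smul_apply, smul_eq_mul] at h2
        rw [← h2]
        simp [Matrix.mulVec, dotProduct, Matrix.map_apply]
      calc ‖v i‖ ≤ ‖μ‖ ^ (N + 1) * ‖v i‖ := by
            have h3 : (1 : ℝ) ≤ ‖μ‖ ^ (N + 1) := one_le_pow₀ hge
            nlinarith [norm_nonneg (v i)]
        _ = ‖(μ ^ (N + 1)) * v i‖ := by rw [norm_mul, norm_pow]
        _ = ‖∑ l, algebraMap ℝ ℂ ((H ^ (N + 1)) i l) * v l‖ := by rw [h1]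
        _ ≤ ∑ l, ‖algebraMap ℝ ℂ ((H ^ (N + 1)) i l) * v l‖ :=
            norm_sum_le _ _
        _ = ∑ l, (H ^ (N + 1)) i l * ‖v l‖ := by
            refine Finset.sum_congr rfl fun l _ => ?_
            rw [norm_mul]
            congr 1
            simpa [Complex.norm_real, Real.norm_eq_abs] using abs_of_nonneg (hHpow (N + 1) i l)
    have hlim : Filter.Tendsto
        (fun N : ℕ => ∑ l, (H ^ (N + 1)) i l * ‖v l‖)
        Filter.atTop (nhds (∑ l : Fin n, (0 : ℝ))) := by
      refine tendsto_finset_sum _ fun l _ => ?_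
      simpa using (hpowtend i l).mul_const (‖v l‖)
    rw [Finset.sum_const_zero] at hlim
    have : ‖v i‖ ≤ 0 := ge_of_tendsto' hlim hbig
    exact hvi (by simpa using le_antisymm this (norm_nonneg _))
  -- conclude about the supremum
  rw [specRad]
  rcases Set.eq_empty_or_nonempty
      {r : ℝ | ∃ μ : ℂ, IsEigen H μ ∧ r = ‖μ‖} with hS | hS
  · rw [hS, Real.sSup_empty]
    norm_num
  · have hcp0 : ((H.map (algebraMap ℝ ℂ)).charpoly) ≠ 0 :=
      (Matrix.charpoly_monic _).ne_zero
    have hfin : {r : ℝ | ∃ μ : ℂ, IsEigen H μ ∧ r = ‖μ‖}.Finite := by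
      refine Set.Finite.subset
        ((Polynomial.finite_setOf_isRoot hcp0).image (fun μ : ℂ => ‖μ‖)) ?_
      rintro r ⟨μ, hμ, rfl⟩
      exact ⟨μ, hμ, rfl⟩
    obtain ⟨μ, hμ, heq⟩ := hS.csSup_mem hfin
    rw [heq]
    exact heig μ hμ
end

section
/- Let (U_k, V_k, E_k), k=1,…,p, be a proper weak regular multisplitting of a semimonotone matrix A ∈ ℝ^{m×n}, with H = Σ E_k U_k† V_k, and assume R(E_k) ⊆ R(Aᵀ) for each k. Then B := A(I - H)⁻¹ and C := B - A give the unique proper splitting A = B - C induced by H (i.e., with B†C = H), and this splitting is a convergent proper weak regular splitting: B† = (I-H)A† ≥ 0, B†C = H ≥ 0, and ρ(B†C) < 1. -/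
open Matrix Polynomial

section Aux

open Matrix

/-- Extensionality via `mulVec`. -/
lemma ext_mulVec' {a b : ℕ} {M N : Matrix (Fin a) (Fin b) ℝ}
    (h : ∀ v, M *ᵥ v = N *ᵥ v) : M = N := by
  ext i j
  have := congrFun (h (Pi.single j 1)) i
  simpa using this

lemma entryNonneg_mul {a b c : ℕ} {M : Matrix (Fin a) (Fin b) ℝ} {N : Matrix (Fin b) (Fin c) ℝ}
    (hM : EntryNonneg M) (hN : EntryNonneg N) : EntryNonneg (M * N) := by
  intro i j
  rw [Matrix.mul_apply]
  exact Finset.sum_nonneg fun l _ => mul_nonneg (hM i l) (hN l j)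

lemma vecMul_apply' {a b : ℕ} (v : Fin a → ℝ) (M : Matrix (Fin a) (Fin b) ℝ) (j : Fin b) :
    (v ᵥ* M) j = ∑ i, v i * M i j := rfl

lemma vecMul_applyC {a b : ℕ} (v : Fin a → ℂ) (M : Matrix (Fin a) (Fin b) ℂ) (j : Fin b) :
    (v ᵥ* M) j = ∑ i, v i * M i j := rfl

/-- A left eigenvector for a root of the (complexified) characteristic polynomial. -/
lemma left_eig_of_isEigen {n : ℕ} {M : Matrix (Fin n) (Fin n) ℝ} {μ : ℂ}
    (h : IsEigen M μ) :
    ∃ v : Fin n → ℂ, v ≠ 0 ∧ v ᵥ* (M.map (algebraMap ℝ ℂ)) = μ • v := by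
  set Mc := M.map (algebraMap ℝ ℂ) with hMc
  have hmap : (Polynomial.evalRingHom μ).mapMatrix (Matrix.charmatrix Mc) = μ • 1 - Mc := by
    ext i j
    by_cases hij : i = j
    · subst hij
      simp [Matrix.charmatrix_apply_eq, Matrix.one_apply]
    · simp [Matrix.charmatrix_apply_ne _ _ _ hij, Matrix.one_apply, hij]
  have hdet : (μ • 1 - Mc).det = 0 := by
    rw [← hmap, ← RingHom.map_det]
    have h' : Mc.charpoly.IsRoot μ := h
    simpa [Matrix.charpoly] using h'
  have hdetT : (μ • 1 - Mcᵀ).det = 0 := by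
    have : (μ • 1 - Mc)ᵀ = μ • 1 - Mcᵀ := by
      rw [Matrix.transpose_sub, Matrix.transpose_smul, Matrix.transpose_one]
    rw [← this, Matrix.det_transpose]
    exact hdet
  obtain ⟨v, hv0, hv⟩ := (Matrix.exists_mulVec_eq_zero_iff).2 hdetT
  refine ⟨v, hv0, ?_⟩
  have : μ • v - Mcᵀ *ᵥ v = 0 := by
    have h1 : (μ • 1 - Mcᵀ) *ᵥ v = μ • v - Mcᵀ *ᵥ v := by
      rw [Matrix.sub_mulVec, Matrix.smul_mulVec, Matrix.one_mulVec]
    rw [← h1]; exact hv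
  have h2 : Mcᵀ *ᵥ v = μ • v := by
    have := sub_eq_zero.mp this
    exact this.symm
  rw [← Matrix.mulVec_transpose]
  exact h2

end Aux

theorem stmt15 {m n p : ℕ} (A : Matrix (Fin m) (Fin n) ℝ)
    (U V : Fin p → Matrix (Fin m) (Fin n) ℝ) (Ud : Fin p → Matrix (Fin n) (Fin m) ℝ)
    (E : Fin p → Matrix (Fin n) (Fin n) ℝ)
    (Ad : Matrix (Fin n) (Fin m) ℝ) (hA : IsMP A Ad) (hsemi : EntryNonneg Ad)
    (hps : ∀ k, ProperSplitting A (U k) (V k)) (hU : ∀ k, IsMP (U k) (Ud k))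
    (hE0 : ∀ k, EntryNonneg (E k)) (hEdiag : ∀ k, ∀ i j, i ≠ j → E k i j = 0)
    (hEsum : ∑ k, E k = 1)
    (hUd : ∀ k, EntryNonneg (Ud k)) (hUdV : ∀ k, EntryNonneg (Ud k * V k))
    (hrange : ∀ k, LinearMap.range (E k).mulVecLin ≤ LinearMap.range (Aᵀ).mulVecLin)
    (H : Matrix (Fin n) (Fin n) ℝ) (hH : H = ∑ k, E k * Ud k * V k)
    (B : Matrix (Fin m) (Fin n) ℝ) (hB : B = A * (1 - H)⁻¹) :
    ProperSplitting A B (B - A) ∧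
    IsMP B ((1 - H) * Ad) ∧ EntryNonneg ((1 - H) * Ad) ∧
    (1 - H) * Ad * (B - A) = H ∧ EntryNonneg H ∧
    specRad ((1 - H) * Ad * (B - A)) < 1 ∧
    (∀ B' C' : Matrix (Fin m) (Fin n) ℝ, ∀ B'd : Matrix (Fin n) (Fin m) ℝ,
      ProperSplitting A B' C' → IsMP B' B'd → B'd * C' = H → B' = B) := by
  obtain ⟨hA1, hA2, hA3, hA4⟩ := hA
  -- Step 1 : Ad * A = 1
  have hPAt : (Ad * A) * Aᵀ = Aᵀ := by
    calc (Ad * A) * Aᵀ = (Ad * A)ᵀ * Aᵀ := by rw [hA4]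
    _ = (A * (Ad * A))ᵀ := by rw [Matrix.transpose_mul A (Ad * A)]
    _ = Aᵀ := by rw [← Matrix.mul_assoc, hA1]
  have hPE : ∀ k, (Ad * A) * E k = E k := by
    intro k
    apply ext_mulVec'
    intro v
    have hv : (E k) *ᵥ v ∈ LinearMap.range (Aᵀ).mulVecLin := by
      apply hrange k
      exact ⟨v, rfl⟩
    obtain ⟨w, hw⟩ := hv
    rw [Matrix.mulVecLin_apply] at hw
    calc ((Ad * A) * E k) *ᵥ v = (Ad * A) *ᵥ (E k *ᵥ v) := by rw [Matrix.mulVec_mulVec]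
    _ = (Ad * A) *ᵥ (Aᵀ *ᵥ w) := by rw [hw]
    _ = ((Ad * A) * Aᵀ) *ᵥ w := by rw [Matrix.mulVec_mulVec]
    _ = Aᵀ *ᵥ w := by rw [hPAt]
    _ = E k *ᵥ v := hw
  have hAdA : Ad * A = 1 := by
    have h1 : (Ad * A) * (∑ k, E k) = ∑ k, E k := by
      rw [Finset.mul_sum]
      exact Finset.sum_congr rfl fun k _ => hPE k
    rwa [hEsum, Matrix.mul_one] at h1
  have hkerA : ∀ x : Fin n → ℝ, A *ᵥ x = 0 → x = 0 := by
    intro x hx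
    have h1 : (Ad * A) *ᵥ x = Ad *ᵥ (A *ᵥ x) := (Matrix.mulVec_mulVec _ _ _).symm
    rw [hAdA, Matrix.one_mulVec, hx, Matrix.mulVec_zero] at h1
    exact h1
  have hkerU : ∀ k, ∀ x : Fin n → ℝ, (U k) *ᵥ x = 0 → x = 0 := by
    intro k x hx
    apply hkerA
    have hmem : x ∈ LinearMap.ker (U k).mulVecLin := by
      rw [LinearMap.mem_ker, Matrix.mulVecLin_apply]; exact hx
    rw [(hps k).2.2, LinearMap.mem_ker, Matrix.mulVecLin_apply] at hmem
    exact hmem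
  have hUdU : ∀ k, Ud k * U k = 1 := by
    intro k
    apply ext_mulVec'
    intro v
    have hd : (U k) *ᵥ ((Ud k * U k) *ᵥ v - v) = 0 := by
      rw [Matrix.mulVec_sub, Matrix.mulVec_mulVec, ← Matrix.mul_assoc, (hU k).1, sub_self]
    have h2 := hkerU k _ hd
    rw [sub_eq_zero] at h2
    rw [h2, Matrix.one_mulVec]
  have hQ : ∀ k, U k * Ud k = A * Ad := by
    intro k
    have hQA : (U k * Ud k) * A = A := by
      apply ext_mulVec'
      intro v
      have hv : A *ᵥ v ∈ LinearMap.range (U k).mulVecLin := by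
        rw [(hps k).2.1]; exact ⟨v, rfl⟩
      obtain ⟨w, hw⟩ := hv
      rw [Matrix.mulVecLin_apply] at hw
      calc ((U k * Ud k) * A) *ᵥ v = (U k * Ud k) *ᵥ (A *ᵥ v) := by rw [Matrix.mulVec_mulVec]
      _ = (U k * Ud k) *ᵥ ((U k) *ᵥ w) := by rw [hw]
      _ = ((U k * Ud k) * U k) *ᵥ w := by rw [Matrix.mulVec_mulVec]
      _ = (U k) *ᵥ w := by rw [(hU k).1]
      _ = A *ᵥ v := hw
    have hAQ : (A * Ad) * U k = U k := by
      apply ext_mulVec'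
      intro v
      have hv : (U k) *ᵥ v ∈ LinearMap.range A.mulVecLin := by
        rw [← (hps k).2.1]; exact ⟨v, rfl⟩
      obtain ⟨w, hw⟩ := hv
      rw [Matrix.mulVecLin_apply] at hw
      calc ((A * Ad) * U k) *ᵥ v = (A * Ad) *ᵥ ((U k) *ᵥ v) := by rw [Matrix.mulVec_mulVec]
      _ = (A * Ad) *ᵥ (A *ᵥ w) := by rw [hw]
      _ = ((A * Ad) * A) *ᵥ w := by rw [Matrix.mulVec_mulVec]
      _ = A *ᵥ w := by rw [hA1]
      _ = (U k) *ᵥ v := hw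
    calc U k * Ud k = (A * Ad) * (U k * Ud k) := by rw [← Matrix.mul_assoc, hAQ]
    _ = (A * Ad)ᵀ * (U k * Ud k)ᵀ := by rw [hA3, (hU k).2.2.1]
    _ = ((U k * Ud k) * (A * Ad))ᵀ := by rw [Matrix.transpose_mul (U k * Ud k) (A * Ad)]
    _ = (((U k * Ud k) * A) * Ad)ᵀ := by rw [← Matrix.mul_assoc]
    _ = (A * Ad)ᵀ := by rw [hQA]
    _ = A * Ad := hA3
  set W : Matrix (Fin n) (Fin m) ℝ := ∑ k, E k * Ud k with hWdef
  have hV : ∀ k, V k = U k - A := by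
    intro k
    rw [(hps k).1, sub_sub_cancel]
  have hterm : ∀ k, E k * Ud k * V k = E k - E k * Ud k * A := by
    intro k
    rw [hV k, Matrix.mul_sub]
    congr 1
    rw [Matrix.mul_assoc, hUdU k, Matrix.mul_one]
  have hHW : H = 1 - W * A := by
    have h1 : ∑ k, E k * Ud k * V k = ∑ k, (E k - E k * Ud k * A) :=
      Finset.sum_congr rfl fun k _ => hterm k
    rw [hH, h1, Finset.sum_sub_distrib, hEsum]
    congr 1
    rw [hWdef, Matrix.sum_mul]
  have hW0 : EntryNonneg W := by
    intro i j
    rw [hWdef, Matrix.sum_apply]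
    exact Finset.sum_nonneg fun k _ => entryNonneg_mul (hE0 k) (hUd k) i j
  have hH0 : EntryNonneg H := by
    intro i j
    rw [hH, Matrix.sum_apply]
    refine Finset.sum_nonneg fun k _ => ?_
    rw [Matrix.mul_assoc]
    exact entryNonneg_mul (hE0 k) (hUdV k) i j
  have hUdQ : ∀ k, Ud k * (A * Ad) = Ud k := by
    intro k
    rw [← hQ k, ← Matrix.mul_assoc, hUdU k, Matrix.one_mul]
  have hWQ : W * (A * Ad) = W := by
    rw [hWdef, Matrix.sum_mul]
    exact Finset.sum_congr rfl fun k _ => by rw [Matrix.mul_assoc, hUdQ k]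
  have hHAd : H * Ad = Ad - W := by
    rw [hHW, Matrix.sub_mul, Matrix.one_mul, Matrix.mul_assoc, hWQ]
  have hEk' : ∀ k, E k * Ud k * U k = E k := by
    intro k; rw [Matrix.mul_assoc, hUdU k, Matrix.mul_one]
  -- The key "no dominated nonnegative left vector" lemma
  have hzero : ∀ z : Fin n → ℝ, (∀ i, 0 ≤ z i) → (∀ j, z j ≤ (z ᵥ* H) j) → z = 0 := by
    intro z hz hle
    have hzW : z ᵥ* W = 0 := by
      funext j
      have hub : (z ᵥ* W) j ≤ 0 := by
        have h1 : (z ᵥ* Ad) j ≤ ((z ᵥ* H) ᵥ* Ad) j := by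
          rw [vecMul_apply', vecMul_apply']
          exact Finset.sum_le_sum fun i _ => mul_le_mul_of_nonneg_right (hle i) (hsemi i j)
        rw [Matrix.vecMul_vecMul, hHAd, Matrix.vecMul_sub] at h1
        simp only [Pi.sub_apply] at h1
        linarith
      have hlb : 0 ≤ (z ᵥ* W) j := by
        rw [vecMul_apply']
        exact Finset.sum_nonneg fun i _ => mul_nonneg (hz i) (hW0 i j)
      simpa using le_antisymm hub hlb
    have hzEUd : ∀ k, z ᵥ* (E k * Ud k) = 0 := by
      have hsplit : ∀ j, ∑ k, (z ᵥ* (E k * Ud k)) j = 0 := by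
        intro j
        have h2 := congrFun hzW j
        rw [hWdef, vecMul_apply'] at h2
        simp only [Matrix.sum_apply, Finset.mul_sum] at h2
        rw [Finset.sum_comm] at h2
        simp only [vecMul_apply']
        simpa using h2
      intro k
      funext j
      have hnn : ∀ k' ∈ Finset.univ, 0 ≤ (z ᵥ* (E k' * Ud k')) j := by
        intro k' _
        rw [vecMul_apply']
        exact Finset.sum_nonneg fun i _ =>
          mul_nonneg (hz i) (entryNonneg_mul (hE0 k') (hUd k') i j)
      have h3 := (Finset.sum_eq_zero_iff_of_nonneg hnn).1 (hsplit j) k (Finset.mem_univ k)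
      simpa using h3
    have hzE : ∀ k, z ᵥ* E k = 0 := by
      intro k
      rw [← hEk' k, ← Matrix.vecMul_vecMul, hzEUd k, Matrix.zero_vecMul]
    have h4 : z ᵥ* (1 : Matrix (Fin n) (Fin n) ℝ) = 0 := by
      rw [← hEsum]
      funext j'
      rw [vecMul_apply']
      simp only [Matrix.sum_apply, Finset.mul_sum]
      rw [Finset.sum_comm]
      refine Finset.sum_eq_zero fun k _ => ?_
      have h5 := congrFun (hzE k) j'
      rw [vecMul_apply'] at h5
      simpa using h5
    funext j
    have h6 := congrFun h4 j
    rw [Matrix.vecMul_one] at h6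
    simpa using h6
  -- fixed vectors are zero
  have hfix : ∀ (v : Fin n → ℝ), v ᵥ* H = v → v = 0 := by
    intro v hv
    have hle : ∀ j, (fun i => |v i|) j ≤ ((fun i => |v i|) ᵥ* H) j := by
      intro j
      show |v j| ≤ _
      rw [vecMul_apply']
      calc |v j| = |(v ᵥ* H) j| := by rw [hv]
      _ = |∑ i, v i * H i j| := by rw [vecMul_apply']
      _ ≤ ∑ i, |v i * H i j| := Finset.abs_sum_le_sum_abs _ _
      _ = ∑ i, |v i| * H i j := Finset.sum_congr rfl fun i _ => by
            rw [abs_mul, abs_of_nonneg (hH0 i j)]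
    have hz := hzero (fun i => |v i|) (fun i => abs_nonneg _) hle
    funext i
    have h7 := congrFun hz i
    simp only [Pi.zero_apply] at h7
    exact abs_eq_zero.mp h7
  have hdetH : IsUnit (1 - H).det := by
    rw [isUnit_iff_ne_zero]
    intro hdet0
    have hdetT : (1 - Hᵀ).det = 0 := by
      have ht : (1 - H)ᵀ = 1 - Hᵀ := by rw [Matrix.transpose_sub, Matrix.transpose_one]
      rw [← ht, Matrix.det_transpose]; exact hdet0
    obtain ⟨v, hv0, hv⟩ := (Matrix.exists_mulVec_eq_zero_iff).2 hdetT
    apply hv0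
    apply hfix
    rw [Matrix.sub_mulVec, Matrix.one_mulVec] at hv
    have h2 := sub_eq_zero.mp hv
    rw [Matrix.mulVec_transpose] at h2
    exact h2.symm
  -- facts about B
  have hBdB : ((1 - H) * Ad) * B = 1 := by
    rw [hB]
    calc (1 - H) * Ad * (A * (1 - H)⁻¹) = ((1 - H) * Ad * A) * (1 - H)⁻¹ := by
          rw [← Matrix.mul_assoc]
    _ = ((1 - H) * (Ad * A)) * (1 - H)⁻¹ := by rw [Matrix.mul_assoc (1 - H) Ad A]
    _ = (1 - H) * (1 - H)⁻¹ := by rw [hAdA, Matrix.mul_one]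
    _ = 1 := Matrix.mul_nonsing_inv _ hdetH
  have hBBd : B * ((1 - H) * Ad) = A * Ad := by
    rw [hB, ← Matrix.mul_assoc, Matrix.nonsing_inv_mul_cancel_right _ _ hdetH]
  have hQAB : (A * Ad) * B = B := by
    rw [hB, ← Matrix.mul_assoc, hA1]
  have hBdA : ((1 - H) * Ad) * A = 1 - H := by
    rw [Matrix.mul_assoc, hAdA, Matrix.mul_one]
  have hMP_B : IsMP B ((1 - H) * Ad) := by
    refine ⟨?_, ?_, ?_, ?_⟩
    · rw [hBBd]; exact hQAB
    · rw [hBdB, Matrix.one_mul]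
    · rw [hBBd]; exact hA3
    · rw [hBdB]; exact Matrix.transpose_one
  have hBdW : (1 - H) * Ad = W := by
    rw [Matrix.sub_mul, Matrix.one_mul, hHAd]
    exact sub_sub_cancel _ _
  have hmain : (1 - H) * Ad * (B - A) = H := by
    rw [Matrix.mul_sub, hBdB, hBdA, sub_sub_cancel]
  have hkerB : ∀ x : Fin n → ℝ, B *ᵥ x = 0 → x = 0 := by
    intro x hx
    rw [hB] at hx
    have h1 : A *ᵥ ((1 - H)⁻¹ *ᵥ x) = 0 := by
      rw [Matrix.mulVec_mulVec]; exact hx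
    have h2 := hkerA _ h1
    have h3 : ((1 - H) * (1 - H)⁻¹) *ᵥ x = (1 - H) *ᵥ ((1 - H)⁻¹ *ᵥ x) :=
      (Matrix.mulVec_mulVec _ _ _).symm
    rw [Matrix.mul_nonsing_inv _ hdetH, Matrix.one_mulVec, h2, Matrix.mulVec_zero] at h3
    exact h3
  have hPS : ProperSplitting A B (B - A) := by
    refine ⟨(sub_sub_cancel B A).symm, ?_, ?_⟩
    · apply le_antisymm
      · rintro y ⟨x, rfl⟩
        refine ⟨(1 - H)⁻¹ *ᵥ x, ?_⟩
        rw [Matrix.mulVecLin_apply, Matrix.mulVecLin_apply, hB, Matrix.mulVec_mulVec]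
      · rintro y ⟨x, rfl⟩
        refine ⟨(1 - H) *ᵥ x, ?_⟩
        rw [Matrix.mulVecLin_apply, Matrix.mulVecLin_apply, hB, Matrix.mulVec_mulVec,
          Matrix.nonsing_inv_mul_cancel_right _ _ hdetH]
    · have e1 : LinearMap.ker B.mulVecLin = ⊥ :=
        LinearMap.ker_eq_bot'.mpr fun x hx => hkerB x (by rwa [Matrix.mulVecLin_apply] at hx)
      have e2 : LinearMap.ker A.mulVecLin = ⊥ :=
        LinearMap.ker_eq_bot'.mpr fun x hx => hkerA x (by rwa [Matrix.mulVecLin_apply] at hx)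
      rw [e1, e2]
  -- spectral radius
  have hlt : ∀ μ : ℂ, IsEigen H μ → ‖μ‖ < 1 := by
    intro μ hμ
    by_contra hge
    push_neg at hge
    obtain ⟨v, hv0, hv⟩ := left_eig_of_isEigen hμ
    apply hv0
    have hle : ∀ j, (fun i => ‖v i‖) j ≤ ((fun i => ‖v i‖) ᵥ* H) j := by
      intro j
      show ‖v j‖ ≤ _
      rw [vecMul_apply']
      calc ‖v j‖ ≤ ‖μ‖ * ‖v j‖ :=
            le_mul_of_one_le_left (norm_nonneg _) hge
      _ = ‖μ * v j‖ := (norm_mul μ (v j)).symm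
      _ = ‖(v ᵥ* H.map (algebraMap ℝ ℂ)) j‖ := by
            rw [hv, Pi.smul_apply, smul_eq_mul]
      _ = ‖∑ i, v i * (H.map (algebraMap ℝ ℂ)) i j‖ := by rw [vecMul_applyC]
      _ ≤ ∑ i, ‖v i * (H.map (algebraMap ℝ ℂ)) i j‖ :=
            norm_sum_le _ _
      _ = ∑ i, ‖v i‖ * H i j := Finset.sum_congr rfl fun i _ => by
            rw [norm_mul]
            congr 1
            simp only [Matrix.map_apply, Complex.coe_algebraMap]
            rw [Complex.norm_real, Real.norm_eq_abs]
            exact abs_of_nonneg (hH0 i j)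
    have hz := hzero (fun i => ‖v i‖) (fun i => norm_nonneg _) hle
    funext i
    have h7 := congrFun hz i
    simp only [Pi.zero_apply] at h7
    simpa using (norm_eq_zero.mp h7)
  have hspecH : specRad H < 1 := by
    have hrw : specRad H = sSup {r : ℝ | ∃ μ : ℂ, IsEigen H μ ∧ r = ‖μ‖} := rfl
    have hfin : {r : ℝ | ∃ μ : ℂ, IsEigen H μ ∧ r = ‖μ‖}.Finite := by
      have hsub : {r : ℝ | ∃ μ : ℂ, IsEigen H μ ∧ r = ‖μ‖} ⊆
          (fun μ : ℂ => ‖μ‖) ''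
            {μ : ℂ | ((H.map (algebraMap ℝ ℂ)).charpoly).IsRoot μ} := by
        rintro r ⟨μ, hμ, rfl⟩
        exact ⟨μ, hμ, rfl⟩
      exact (Set.Finite.image _
        (Polynomial.finite_setOf_isRoot (Matrix.charpoly_monic _).ne_zero)).subset hsub
    rcases Set.eq_empty_or_nonempty
        {r : ℝ | ∃ μ : ℂ, IsEigen H μ ∧ r = ‖μ‖} with hS | hS
    · rw [hrw, hS, Real.sSup_empty]; norm_num
    · obtain ⟨μ, hμ, heq⟩ := hS.csSup_mem hfin
      rw [hrw, heq]
      exact hlt μ hμ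
  -- uniqueness
  have huniq : ∀ B' C' : Matrix (Fin m) (Fin n) ℝ, ∀ B'd : Matrix (Fin n) (Fin m) ℝ,
      ProperSplitting A B' C' → IsMP B' B'd → B'd * C' = H → B' = B := by
    intro B' C' B'd hps' hmp' heq
    obtain ⟨hs1, hs2, hs3⟩ := hps'
    obtain ⟨m1, m2, m3, m4⟩ := hmp'
    have hC' : C' = B' - A := by rw [hs1, sub_sub_cancel]
    have hkerB' : ∀ x : Fin n → ℝ, B' *ᵥ x = 0 → x = 0 := by
      intro x hx
      apply hkerA
      have hmem : x ∈ LinearMap.ker B'.mulVecLin := by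
        rw [LinearMap.mem_ker, Matrix.mulVecLin_apply]; exact hx
      rw [hs3, LinearMap.mem_ker, Matrix.mulVecLin_apply] at hmem
      exact hmem
    have hBdB' : B'd * B' = 1 := by
      apply ext_mulVec'
      intro v
      have hd : B' *ᵥ ((B'd * B') *ᵥ v - v) = 0 := by
        rw [Matrix.mulVec_sub, Matrix.mulVec_mulVec, ← Matrix.mul_assoc, m1, sub_self]
      have h2 := hkerB' _ hd
      rw [sub_eq_zero] at h2
      rw [h2, Matrix.one_mulVec]
    have hprojA : (B' * B'd) * A = A := by
      apply ext_mulVec'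
      intro v
      have hv : A *ᵥ v ∈ LinearMap.range B'.mulVecLin := by
        rw [hs2]; exact ⟨v, rfl⟩
      obtain ⟨w, hw⟩ := hv
      rw [Matrix.mulVecLin_apply] at hw
      calc ((B' * B'd) * A) *ᵥ v = (B' * B'd) *ᵥ (A *ᵥ v) := by rw [Matrix.mulVec_mulVec]
      _ = (B' * B'd) *ᵥ (B' *ᵥ w) := by rw [hw]
      _ = ((B' * B'd) * B') *ᵥ w := by rw [Matrix.mulVec_mulVec]
      _ = B' *ᵥ w := by rw [m1]
      _ = A *ᵥ v := hw
    have hBdA' : B'd * A = 1 - H := by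
      rw [hC', Matrix.mul_sub, hBdB'] at heq
      have h6 := congrArg (fun X => (1 : Matrix (Fin n) (Fin n) ℝ) - X) heq
      simpa [sub_sub_cancel] using h6
    have hBA : B' * (1 - H) = A := by
      rw [← hBdA', ← Matrix.mul_assoc]
      exact hprojA
    calc B' = B' * ((1 - H) * (1 - H)⁻¹) := by
          rw [Matrix.mul_nonsing_inv _ hdetH, Matrix.mul_one]
    _ = (B' * (1 - H)) * (1 - H)⁻¹ := by rw [Matrix.mul_assoc]
    _ = A * (1 - H)⁻¹ := by rw [hBA]
    _ = B := hB.symm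
  exact ⟨hPS, hMP_B, by rw [hBdW]; exact hW0, hmain, hH0,
    by rw [hmain]; exact hspecH, huniq⟩
end

section
/- Let (U_k, V_k, E_k), k=1,…,p, be a proper weak regular multisplitting of a semimonotone matrix A ∈ ℝ^{m×n} with A ≥ 0 and R(E_k) ⊆ R(Aᵀ) for each k. Then the splitting A = B - C induced by H = Σ E_k U_k† V_k, with B = A(I-H)⁻¹, is a proper regular splitting, i.e., additionally C = A(I-H)⁻¹H ≥ 0. -/
open Matrix Polynomial

private lemma matrix_ext_mulVec' {m n : ℕ} {M N : Matrix (Fin m) (Fin n) ℝ}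
    (h : ∀ v, M.mulVec v = N.mulVec v) : M = N := by
  ext i j
  have := congrFun (h (Pi.single j 1)) i
  simpa using this

private lemma cancel_left' {m n q : ℕ} {A : Matrix (Fin m) (Fin n) ℝ}
    (hker : ∀ v, A.mulVec v = 0 → v = 0) {M N : Matrix (Fin n) (Fin q) ℝ}
    (h : A * M = A * N) : M = N := by
  apply matrix_ext_mulVec'
  intro v
  have h1 : A.mulVec (M.mulVec v - N.mulVec v) = 0 := by
    rw [Matrix.mulVec_sub, Matrix.mulVec_mulVec, Matrix.mulVec_mulVec, h, sub_self]
  have := hker _ h1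
  exact sub_eq_zero.mp this

private lemma key_nonneg' {n : ℕ} {H : Matrix (Fin n) (Fin n) ℝ}
    (hH : ∀ i j, 0 ≤ H i j) {x : Fin n → ℝ} (hx : ∀ i, 0 < x i)
    (hlt : ∀ i, H.mulVec x i < x i) {y c : Fin n → ℝ} (hc : ∀ i, 0 ≤ c i)
    (hy : ∀ i, y i = H.mulVec y i + c i) : ∀ i, 0 ≤ y i := by
  intro i
  by_contra hneg
  push_neg at hneg
  obtain ⟨i0, -, hmax⟩ := Finset.exists_max_image Finset.univ (fun j => -y j / x j)
    ⟨i, Finset.mem_univ i⟩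
  set t := -y i0 / x i0 with ht
  have hti : 0 < -y i / x i := div_pos (by linarith) (hx i)
  have htpos : 0 < t := lt_of_lt_of_le hti (hmax i (Finset.mem_univ i))
  have hbound : ∀ j, -(t * x j) ≤ y j := by
    intro j
    have h1 := hmax j (Finset.mem_univ j)
    have h2 := (div_le_iff₀ (hx j)).mp h1
    linarith
  have h1 : t * x i0 = -y i0 := div_mul_cancel₀ _ (ne_of_gt (hx i0))
  have h2 : -(t * (H.mulVec x i0)) ≤ H.mulVec y i0 := by
    have e1 : -(t * H.mulVec x i0) = ∑ j, H i0 j * (-(t * x j)) := by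
      show -(t * ∑ j, H i0 j * x j) = _
      rw [Finset.mul_sum, ← Finset.sum_neg_distrib]
      exact Finset.sum_congr rfl fun j _ => by ring
    rw [e1]
    exact Finset.sum_le_sum fun j _ => mul_le_mul_of_nonneg_left (hbound j) (hH i0 j)
  have h3 := hlt i0
  have h4 := hy i0
  have h5 : t * H.mulVec x i0 < t * x i0 := mul_lt_mul_of_pos_left h3 htpos
  have h6 := hc i0
  linarith

theorem stmt16 {m n p : ℕ} (A : Matrix (Fin m) (Fin n) ℝ)
    (U V : Fin p → Matrix (Fin m) (Fin n) ℝ) (Ud : Fin p → Matrix (Fin n) (Fin m) ℝ)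
    (E : Fin p → Matrix (Fin n) (Fin n) ℝ)
    (Ad : Matrix (Fin n) (Fin m) ℝ) (hA : IsMP A Ad) (hsemi : EntryNonneg Ad)
    (hAnn : EntryNonneg A)
    (hps : ∀ k, ProperSplitting A (U k) (V k)) (hU : ∀ k, IsMP (U k) (Ud k))
    (hE0 : ∀ k, EntryNonneg (E k)) (hEdiag : ∀ k, ∀ i j, i ≠ j → E k i j = 0)
    (hEsum : ∑ k, E k = 1)
    (hUd : ∀ k, EntryNonneg (Ud k)) (hUdV : ∀ k, EntryNonneg (Ud k * V k))
    (hrange : ∀ k, LinearMap.range (E k).mulVecLin ≤ LinearMap.range (Aᵀ).mulVecLin)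
    (H : Matrix (Fin n) (Fin n) ℝ) (hH : H = ∑ k, E k * Ud k * V k)
    (B : Matrix (Fin m) (Fin n) ℝ) (hB : B = A * (1 - H)⁻¹) :
    ProperSplitting A B (B - A) ∧ IsMP B ((1 - H) * Ad) ∧
    EntryNonneg ((1 - H) * Ad) ∧
    B - A = A * (1 - H)⁻¹ * H ∧ EntryNonneg (A * (1 - H)⁻¹ * H) := by
  obtain ⟨hA1, hA2, hA3, hA4⟩ := hA
  have hV : ∀ k, V k = U k - A := fun k => by
    rw [(hps k).1]; exact (sub_sub_cancel _ _).symm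
  -- every standard basis vector lies in the range of Aᵀ
  have hsingle : ∀ i : Fin n, ∃ u, Aᵀ.mulVec u = Pi.single i 1 := by
    intro i
    have hmem : (Pi.single i (1:ℝ)) ∈ LinearMap.range (Aᵀ).mulVecLin := by
      have hsum : (Pi.single i (1:ℝ)) = ∑ k, (E k).mulVec (Pi.single i 1) := by
        have hswap : ∑ k, (E k).mulVec (Pi.single i (1:ℝ)) = (∑ k, E k).mulVec (Pi.single i 1) := by
          funext l
          rw [Finset.sum_apply]
          simp only [Matrix.mulVec, dotProduct, Matrix.sum_apply, Finset.sum_mul]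
          rw [Finset.sum_comm]
        rw [hswap, hEsum, Matrix.one_mulVec]
      rw [hsum]
      exact Submodule.sum_mem _ fun k _ =>
        hrange k ⟨Pi.single i 1, by rw [Matrix.mulVecLin_apply]⟩
    obtain ⟨u, hu⟩ := hmem
    exact ⟨u, by rw [← Matrix.mulVecLin_apply]; exact hu⟩
  -- A has trivial kernel
  have hkerA : ∀ v, A.mulVec v = 0 → v = 0 := by
    intro v hv
    funext i
    obtain ⟨u, hu⟩ := hsingle i
    have h1 : Aᵀ.mulVec u ⬝ᵥ v = u ⬝ᵥ A.mulVec v := by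
      rw [Matrix.mulVec_transpose, ← Matrix.dotProduct_mulVec]
    rw [hu, hv, dotProduct_zero] at h1
    simpa using h1
  have hkerU : ∀ k, ∀ v, (U k).mulVec v = 0 → v = 0 := by
    intro k v hv
    have hvmem : v ∈ LinearMap.ker (U k).mulVecLin := by
      rw [LinearMap.mem_ker, Matrix.mulVecLin_apply]; exact hv
    rw [(hps k).2.2, LinearMap.mem_ker, Matrix.mulVecLin_apply] at hvmem
    exact hkerA v hvmem
  have hAdA : Ad * A = 1 := by
    refine cancel_left' hkerA ?_
    rw [Matrix.mul_one, ← Matrix.mul_assoc, hA1]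
  have hUdU : ∀ k, Ud k * U k = 1 := fun k => by
    refine cancel_left' (hkerU k) ?_
    rw [Matrix.mul_one, ← Matrix.mul_assoc, (hU k).1]
  -- projections agree: A Ad = U_k Ud_k
  have hQA : ∀ k, U k * Ud k * A = A := by
    intro k
    apply matrix_ext_mulVec'
    intro v
    have hmem : A.mulVec v ∈ LinearMap.range (U k).mulVecLin := by
      rw [(hps k).2.1]; exact ⟨v, by rw [Matrix.mulVecLin_apply]⟩
    obtain ⟨w, hw⟩ := hmem
    rw [Matrix.mulVecLin_apply] at hw
    calc (U k * Ud k * A).mulVec v = (U k * Ud k).mulVec (A.mulVec v) :=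
          (Matrix.mulVec_mulVec v _ _).symm
      _ = (U k * Ud k).mulVec ((U k).mulVec w) := by rw [hw]
      _ = (U k * Ud k * U k).mulVec w := Matrix.mulVec_mulVec w _ _
      _ = (U k).mulVec w := by rw [(hU k).1]
      _ = A.mulVec v := hw
  have hPU : ∀ k, A * Ad * U k = U k := by
    intro k
    apply matrix_ext_mulVec'
    intro v
    have hmem : (U k).mulVec v ∈ LinearMap.range A.mulVecLin := by
      rw [← (hps k).2.1]; exact ⟨v, by rw [Matrix.mulVecLin_apply]⟩
    obtain ⟨w, hw⟩ := hmem
    rw [Matrix.mulVecLin_apply] at hw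
    calc (A * Ad * U k).mulVec v = (A * Ad).mulVec ((U k).mulVec v) :=
          (Matrix.mulVec_mulVec v _ _).symm
      _ = (A * Ad).mulVec (A.mulVec w) := by rw [hw]
      _ = (A * Ad * A).mulVec w := Matrix.mulVec_mulVec w _ _
      _ = A.mulVec w := by rw [hA1]
      _ = (U k).mulVec v := hw
  have hPQ : ∀ k, A * Ad = U k * Ud k := by
    intro k
    have h1 : U k * Ud k * (A * Ad) = A * Ad := by rw [← Matrix.mul_assoc, hQA k]
    have h2 : A * Ad * (U k * Ud k) = U k * Ud k := by rw [← Matrix.mul_assoc, hPU k]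
    calc A * Ad = (A * Ad)ᵀ := hA3.symm
      _ = (U k * Ud k * (A * Ad))ᵀ := by rw [h1]
      _ = (A * Ad)ᵀ * (U k * Ud k)ᵀ := Matrix.transpose_mul _ _
      _ = (A * Ad) * (U k * Ud k) := by rw [hA3, (hU k).2.2.1]
      _ = U k * Ud k := h2
  have hUdP : ∀ k, Ud k * (A * Ad) = Ud k := by
    intro k
    rw [hPQ k, ← Matrix.mul_assoc, hUdU k, Matrix.one_mul]
  -- W and the identity 1 - H = W * A
  set W : Matrix (Fin n) (Fin m) ℝ := ∑ k, E k * Ud k with hWdef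
  have hHeq : H = 1 - W * A := by
    rw [hH]
    calc ∑ k, E k * Ud k * V k = ∑ k, (E k - E k * Ud k * A) :=
          Finset.sum_congr rfl (fun k _ => by
            have h1 : E k * Ud k * U k = E k := by
              rw [Matrix.mul_assoc, hUdU k, Matrix.mul_one]
            rw [hV k, Matrix.mul_sub, h1])
      _ = (∑ k, E k) - ∑ k, E k * Ud k * A := Finset.sum_sub_distrib _ _
      _ = 1 - W * A := by rw [hEsum, hWdef, Matrix.sum_mul]
  have hKW : 1 - H = W * A := by rw [hHeq, sub_sub_cancel]
  -- nonnegativity facts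
  have mulNN : ∀ {a b c : ℕ} (M : Matrix (Fin a) (Fin b) ℝ) (N : Matrix (Fin b) (Fin c) ℝ),
      EntryNonneg M → EntryNonneg N → EntryNonneg (M * N) := by
    intro a b c M N hM hN i j
    rw [Matrix.mul_apply]
    exact Finset.sum_nonneg fun l _ => mul_nonneg (hM i l) (hN l j)
  have hHnn : EntryNonneg H := by
    intro i j
    rw [hH, Matrix.sum_apply]
    refine Finset.sum_nonneg fun k _ => ?_
    rw [Matrix.mul_assoc]
    exact mulNN _ _ (hE0 k) (hUdV k) i j
  have hWnn : EntryNonneg W := by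
    intro i j
    rw [hWdef, Matrix.sum_apply]
    exact Finset.sum_nonneg fun k _ => mulNN _ _ (hE0 k) (hUd k) i j
  -- the positive vector x
  set e : Fin m → ℝ := fun _ => 1 with he
  set x : Fin n → ℝ := Ad.mulVec e with hxdef
  have hxpos : ∀ i, 0 < x i := by
    intro i
    have hex : ∃ j, 0 < Ad i j := by
      by_contra hcon
      push_neg at hcon
      have hzero : ∀ j, Ad i j = 0 := fun j => le_antisymm (hcon j) (hsemi i j)
      have hz : (Ad * A) i i = 0 := by
        rw [Matrix.mul_apply]
        exact Finset.sum_eq_zero fun j _ => by rw [hzero j, zero_mul]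
      rw [hAdA] at hz
      simp [Matrix.one_apply] at hz
    obtain ⟨j0, hj0⟩ := hex
    have hxi : x i = ∑ j, Ad i j := by
      simp [hxdef, Matrix.mulVec, dotProduct, he]
    rw [hxi]
    exact Finset.sum_pos' (fun j _ => hsemi i j) ⟨j0, Finset.mem_univ j0, hj0⟩
  have hUdrow : ∀ k i, 0 < ∑ j, Ud k i j := by
    intro k i
    have hex : ∃ j, 0 < Ud k i j := by
      by_contra hcon
      push_neg at hcon
      have hzero : ∀ j, Ud k i j = 0 := fun j => le_antisymm (hcon j) (hUd k i j)
      have hz : (Ud k * U k) i i = 0 := by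
        rw [Matrix.mul_apply]
        exact Finset.sum_eq_zero fun j _ => by rw [hzero j, zero_mul]
      rw [hUdU k] at hz
      simp [Matrix.one_apply] at hz
    obtain ⟨j0, hj0⟩ := hex
    exact Finset.sum_pos' (fun j _ => hUd k i j) ⟨j0, Finset.mem_univ j0, hj0⟩
  have hWAAd : W * (A * Ad) = W := by
    rw [hWdef, Matrix.sum_mul]
    exact Finset.sum_congr rfl fun k _ => by rw [Matrix.mul_assoc (E k), hUdP k]
  have hWAx : (W * A).mulVec x = W.mulVec e := by
    rw [hxdef, Matrix.mulVec_mulVec, Matrix.mul_assoc, hWAAd]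
  have hWe : ∀ i, 0 < W.mulVec e i := by
    intro i
    have hEU : ∀ k j, (E k * Ud k) i j = E k i i * Ud k i j := by
      intro k j
      rw [Matrix.mul_apply]
      refine Finset.sum_eq_single i (fun l _ hl => by rw [hEdiag k i l (Ne.symm hl), zero_mul])
        (fun h => absurd (Finset.mem_univ i) h)
    have h1 : W.mulVec e i = ∑ k, E k i i * ∑ j, Ud k i j := by
      show ∑ j, W i j * e j = _
      simp only [he, mul_one]
      rw [hWdef]
      simp only [Matrix.sum_apply, hEU]
      rw [Finset.sum_comm]
      exact Finset.sum_congr rfl fun k _ => (Finset.mul_sum _ _ _).symm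
    have hEsum_i : ∑ k, E k i i = 1 := by
      have := congrArg (fun M => M i i) hEsum
      simpa [Matrix.sum_apply, Matrix.one_apply] using this
    have hexk : ∃ k, 0 < E k i i := by
      by_contra hcon
      push_neg at hcon
      have hz : ∑ k, E k i i = 0 :=
        Finset.sum_eq_zero fun k _ => le_antisymm (hcon k) (hE0 k i i)
      rw [hEsum_i] at hz
      norm_num at hz
    obtain ⟨k0, hk0⟩ := hexk
    rw [h1]
    exact Finset.sum_pos' (fun k _ => mul_nonneg (hE0 k i i) (le_of_lt (hUdrow k i)))
      ⟨k0, Finset.mem_univ k0, mul_pos hk0 (hUdrow k0 i)⟩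
  have hlt : ∀ i, H.mulVec x i < x i := by
    intro i
    have h0 : (1 - H).mulVec x = (W * A).mulVec x := by rw [hKW]
    rw [Matrix.sub_mulVec, Matrix.one_mulVec, hWAx] at h0
    have h1 := congrFun h0 i
    have h2 := hWe i
    simp only [Pi.sub_apply] at h1
    linarith
  -- invertibility of 1 - H
  have hKker : ∀ y, (1 - H).mulVec y = 0 → y = 0 := by
    intro y hy
    have hy1 : ∀ i, y i = H.mulVec y i + (fun _ => (0:ℝ)) i := by
      intro i
      have := congrFun hy i
      rw [Matrix.sub_mulVec, Matrix.one_mulVec] at this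
      simp only [Pi.sub_apply, Pi.zero_apply] at this ⊢
      linarith
    have hy2 : ∀ i, (-y) i = H.mulVec (-y) i + (fun _ => (0:ℝ)) i := by
      intro i
      rw [Matrix.mulVec_neg]
      have := hy1 i
      simp only [Pi.neg_apply] at this ⊢
      linarith
    have hp := key_nonneg' hHnn hxpos hlt (fun _ => le_refl 0) hy1
    have hn := key_nonneg' hHnn hxpos hlt (fun _ => le_refl 0) hy2
    funext i
    have := hn i
    simp only [Pi.neg_apply] at this
    have := hp i
    show y i = 0
    have h1 := hn i
    simp only [Pi.neg_apply] at h1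
    linarith
  have hKdet : IsUnit (1 - H).det := by
    rw [isUnit_iff_ne_zero]
    intro h0
    obtain ⟨v, hv0, hv⟩ := Matrix.exists_mulVec_eq_zero_iff.mpr h0
    exact hv0 (hKker v hv)
  have hKinv : (1 - H) * (1 - H)⁻¹ = 1 := Matrix.mul_nonsing_inv _ hKdet
  have hKinv' : (1 - H)⁻¹ * (1 - H) = 1 := Matrix.nonsing_inv_mul _ hKdet
  -- (1 - H)⁻¹ is entrywise nonnegative
  have hKinn : EntryNonneg (1 - H)⁻¹ := by
    intro i j
    set y : Fin n → ℝ := (1 - H)⁻¹.mulVec (Pi.single j 1) with hydef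
    have h1 : (1 - H).mulVec y = Pi.single j 1 := by
      rw [hydef, Matrix.mulVec_mulVec, hKinv, Matrix.one_mulVec]
    have h2 : ∀ i', y i' = H.mulVec y i' + (Pi.single j (1:ℝ) : Fin n → ℝ) i' := by
      intro i'
      have h3 := congrFun h1 i'
      rw [Matrix.sub_mulVec, Matrix.one_mulVec] at h3
      simp only [Pi.sub_apply] at h3
      linarith
    have hcnn : ∀ i', (0:ℝ) ≤ (Pi.single j 1 : Fin n → ℝ) i' := by
      intro i'
      rw [Pi.single_apply]
      split <;> norm_num
    have h4 := key_nonneg' hHnn hxpos hlt hcnn h2 i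
    have h5 : y i = (1 - H)⁻¹ i j := by
      rw [hydef]
      simp [Matrix.mulVec_single]
    linarith [h5 ▸ h4]
  -- key algebraic identities
  have hBA : B * (1 - H) = A := by rw [hB, Matrix.mul_assoc, hKinv', Matrix.mul_one]
  have hkerB : ∀ v, B.mulVec v = 0 → v = 0 := by
    intro v hv
    rw [hB] at hv
    have h1 : A.mulVec ((1 - H)⁻¹.mulVec v) = 0 := by
      rw [Matrix.mulVec_mulVec]; exact hv
    have h2 := hkerA _ h1
    have h3 : v = (1 - H).mulVec ((1 - H)⁻¹.mulVec v) := by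
      rw [Matrix.mulVec_mulVec, hKinv, Matrix.one_mulVec]
    rw [h3, h2, Matrix.mulVec_zero]
  have kerbot : ∀ {a : ℕ} (M : Matrix (Fin a) (Fin n) ℝ),
      (∀ v, M.mulVec v = 0 → v = 0) → LinearMap.ker M.mulVecLin = ⊥ := by
    intro a M hM
    rw [eq_bot_iff]
    intro v hv
    rw [LinearMap.mem_ker, Matrix.mulVecLin_apply] at hv
    exact (Submodule.mem_bot _).mpr (hM v hv)
  have hBX : B * ((1 - H) * Ad) = A * Ad := by
    rw [hB, ← Matrix.mul_assoc, Matrix.mul_assoc A, hKinv', Matrix.mul_one]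
  have hXB : ((1 - H) * Ad) * B = 1 := by
    rw [hB, ← Matrix.mul_assoc, Matrix.mul_assoc (1 - H) Ad A, hAdA, Matrix.mul_one, hKinv]
  have hKAd : (1 - H) * Ad = W := by rw [hKW, Matrix.mul_assoc, hWAAd]
  refine ⟨⟨(sub_sub_cancel B A).symm, ?_, ?_⟩, ⟨?_, ?_, ?_, ?_⟩, ?_, ?_, ?_⟩
  · -- range B = range A
    apply le_antisymm
    · rintro w ⟨v, rfl⟩
      refine ⟨(1 - H)⁻¹.mulVec v, ?_⟩
      rw [Matrix.mulVecLin_apply, Matrix.mulVecLin_apply, hB, ← Matrix.mulVec_mulVec]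
    · rintro w ⟨v, rfl⟩
      refine ⟨(1 - H).mulVec v, ?_⟩
      rw [Matrix.mulVecLin_apply, Matrix.mulVecLin_apply, Matrix.mulVec_mulVec, hBA]
  · rw [kerbot B hkerB, kerbot A hkerA]
  · -- B * X * B = B
    rw [hBX, hB, ← Matrix.mul_assoc, hA1]
  · -- X * B * X = X
    rw [hXB, Matrix.one_mul]
  · -- (B * X)ᵀ = B * X
    rw [hBX]; exact hA3
  · -- (X * B)ᵀ = X * B
    rw [hXB, Matrix.transpose_one]
  · -- EntryNonneg ((1-H) * Ad)
    rw [hKAd]; exact hWnn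
  · -- B - A = A (1-H)⁻¹ H
    have h1 : A * (1 - H)⁻¹ * (1 - H) = A := by
      rw [Matrix.mul_assoc, hKinv', Matrix.mul_one]
    calc B - A = A * (1 - H)⁻¹ - A * (1 - H)⁻¹ * (1 - H) := by rw [hB, h1]
      _ = A * (1 - H)⁻¹ * H := by rw [Matrix.mul_sub, Matrix.mul_one, sub_sub_cancel]
  · -- EntryNonneg (A (1-H)⁻¹ H)
    exact mulNN _ _ (mulNN _ _ hAnn hKinn) hHnn
end
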